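/- arXiv:1608.07614 — 7 statements merged into one kernel-verified Lean document; each statement's English description precedes it below -/
import Mathlib

section
/- For every n ≥ 1, the path graph P_n on vertices 1, 2, …, n (with edges exactly between i and i+1 for 1 ≤ i ≤ n−1) is 123-representable. -/
/-- Two letters `x` and `y` alternate in the word `w`: between any two occurrences of `x`
there is an occurrence of `y`, and between any two occurrences of `y` there is an
occurrence of `x`. -/
def Alternates {α : Type*} (w : List α) (x y : α) : Prop :=
  (∀ i j : ℕ, i < j → w[i]? = some x → w[j]? = some x →
      ∃ k : ℕ, i < k ∧ k < j ∧ w[k]? = some y) ∧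
  (∀ i j : ℕ, i < j → w[i]? = some y → w[j]? = some y →
      ∃ k : ℕ, i < k ∧ k < j ∧ w[k]? = some x)

/-- A word `w` over the vertex set of `G` represents `G`: every vertex occurs in `w`, and
two distinct vertices alternate in `w` iff they are adjacent in `G`. -/
def Represents {α : Type*} (G : SimpleGraph α) (w : List α) : Prop :=
  (∀ v : α, v ∈ w) ∧ ∀ x y : α, x ≠ y → (Alternates w x y ↔ G.Adj x y)

/-- A word `w` over the labels represents `G` via the (injective) labeling `f` of the
vertices: every letter of `w` is the label of a vertex, every vertex's label occurs in `w`,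
and the labels of two distinct vertices alternate in `w` iff the vertices are adjacent. -/
def RepresentsLab {V L : Type*} (G : SimpleGraph V) (f : V → L) (w : List L) : Prop :=
  (∀ l ∈ w, ∃ v : V, f v = l) ∧ (∀ v : V, f v ∈ w) ∧
  ∀ x y : V, x ≠ y → (Alternates w (f x) (f y) ↔ G.Adj x y)

/-- `w` avoids the pattern 123: it has no strictly increasing subsequence of length 3. -/
def Avoids123 {α : Type*} [LinearOrder α] (w : List α) : Prop :=
  ¬ ∃ (i j k : ℕ) (a b c : α), i < j ∧ j < k ∧
    w[i]? = some a ∧ w[j]? = some b ∧ w[k]? = some c ∧ a < b ∧ b < c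

/-- `w` avoids the pattern 132: there are no indices `i < j < k` with `w_i < w_k < w_j`. -/
def Avoids132 {α : Type*} [LinearOrder α] (w : List α) : Prop :=
  ¬ ∃ (i j k : ℕ) (a b c : α), i < j ∧ j < k ∧
    w[i]? = some a ∧ w[j]? = some b ∧ w[k]? = some c ∧ a < c ∧ c < b

/-- `w` is 2-uniform: every letter occurring in `w` occurs exactly twice. -/
def TwoUniform {α : Type*} (w : List α) : Prop :=
  ∀ x ∈ w, ∃ i j : ℕ, i ≠ j ∧ w[i]? = some x ∧ w[j]? = some x ∧
    ∀ k : ℕ, w[k]? = some x → k = i ∨ k = j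

/-- `s` and `τ` are order-isomorphic words: same length and entries in corresponding
positions compare the same way. -/
def OrderIsoWords {α β : Type*} [LinearOrder α] [LinearOrder β]
    (s : List α) (τ : List β) : Prop :=
  s.length = τ.length ∧
  ∀ (i j : ℕ) (a b : α) (c d : β),
    s[i]? = some a → s[j]? = some b → τ[i]? = some c → τ[j]? = some d →
    (a < b ↔ c < d)

/-- `w` contains the pattern `τ`: some subsequence of `w` is order-isomorphic to `τ`. -/
def ContainsPattern {α β : Type*} [LinearOrder α] [LinearOrder β]
    (w : List α) (τ : List β) : Prop :=
  ∃ s : List α, s.Sublist w ∧ OrderIsoWords s τ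

/-- `G` is 123-representable: after relabeling the vertices injectively by elements of some
linearly ordered set, `G` is represented by a 123-avoiding word. -/
def Rep123 {V : Type*} (G : SimpleGraph V) : Prop :=
  ∃ (L : Type) (inst : LinearOrder L) (f : V → L), Function.Injective f ∧
    ∃ w : List L, @Avoids123 L inst w ∧ RepresentsLab G f w

/-- `G` is 132-representable: after relabeling the vertices injectively by elements of some
linearly ordered set, `G` is represented by a 132-avoiding word. -/
def Rep132 {V : Type*} (G : SimpleGraph V) : Prop :=
  ∃ (L : Type) (inst : LinearOrder L) (f : V → L), Function.Injective f ∧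
    ∃ w : List L, @Avoids132 L inst w ∧ RepresentsLab G f w

/-- The path graph `P_n`: vertices `0, …, n-1` (standing for `1, …, n`), with edges exactly
between consecutive vertices `i` and `i+1`. -/
def pathG (n : ℕ) : SimpleGraph (Fin n) :=
  SimpleGraph.fromRel (fun i j => (i : ℕ) + 1 = (j : ℕ))

def pg (n p : ℕ) : ℕ :=
  if p = 0 then 0 else if p = 2*n-1 then n-1
  else if p % 2 = 0 then p/2 - 1 else p/2 + 1

/-- first occurrence of letter `x`. -/
def pA (x : ℕ) : ℕ := if x = 0 then 0 else 2*x - 1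

/-- second occurrence of letter `x`. -/
def pB (n x : ℕ) : ℕ := if x = n-1 then 2*n-1 else 2*x + 2

/-- the reversed word (labels reversed so that it avoids 123). -/
def pw (n : ℕ) : List ℕ := (List.range (2*n)).map (fun p => n - 1 - pg n p)

lemma pg_lt (n p : ℕ) (hn : 1 ≤ n) (hp : p < 2*n) : pg n p < n := by
  unfold pg; split_ifs <;> omega

lemma occ (n x p : ℕ) (hx : x < n) (hp : p < 2*n) :
    pg n p = x ↔ (p = pA x ∨ p = pB n x) := by
  unfold pg pA pB; split_ifs <;> omega

lemma lemA (n p q : ℕ) (hpq : p < q) (hq : q < 2*n) : pg n p ≤ pg n q + 1 := by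
  unfold pg; split_ifs <;> omega

lemma pw_get (n p : ℕ) (hp : p < 2*n) : (pw n)[p]? = some (n - 1 - pg n p) := by
  simp [pw, hp]

lemma pw_len (n : ℕ) : (pw n).length = 2*n := by simp [pw]

lemma occW (n x : ℕ) (hx : x < n) (p : ℕ) :
    (pw n)[p]? = some (n-1-x) ↔ (p = pA x ∨ p = pB n x) := by
  constructor
  · intro h
    have hp : p < 2*n := by
      have := (List.getElem?_eq_some_iff.mp h).1
      rwa [pw_len] at this
    rw [pw_get n p hp] at h
    have h2 := pg_lt n p (by omega) hp
    have : pg n p = x := by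
      have := Option.some_injective _ h
      omega
    exact (occ n x p hx hp).mp this
  · intro h
    have hp : p < 2*n := by
      rcases h with h | h <;> simp [pA, pB] at h <;> split_ifs at h <;> omega
    rw [pw_get n p hp]
    have : pg n p = x := (occ n x p hx hp).mpr h
    rw [this]

lemma pAB_lt (n x : ℕ) (hx : x < n) : pA x < pB n x := by
  unfold pA pB; split_ifs <;> omega

lemma ij_eq (n x : ℕ) (hx : x < n) {i j : ℕ} (hij : i < j)
    (hi : (pw n)[i]? = some (n-1-x)) (hj : (pw n)[j]? = some (n-1-x)) :
    i = pA x ∧ j = pB n x := by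
  have h1 := (occW n x hx i).mp hi
  have h2 := (occW n x hx j).mp hj
  have h3 := pAB_lt n x hx
  rcases h1 with h1 | h1 <;> rcases h2 with h2 | h2 <;> omega

lemma alt_adj (n x : ℕ) (hx : x + 1 < n) :
    Alternates (pw n) (n-1-x) (n-1-(x+1)) := by
  have hy : x + 1 < n := hx
  constructor
  · intro i j hij hi hj
    obtain ⟨hi', hj'⟩ := ij_eq n x (by omega) hij hi hj
    refine ⟨pA (x+1), ?_, ?_, (occW n (x+1) hy _).mpr (Or.inl rfl)⟩ <;>
      · subst hi' hj'; simp only [pA, pB]; split_ifs <;> first | omega | simp_all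
  · intro i j hij hi hj
    obtain ⟨hi', hj'⟩ := ij_eq n (x+1) hy hij hi hj
    refine ⟨pB n x, ?_, ?_, (occW n x (by omega) _).mpr (Or.inr rfl)⟩ <;>
      · subst hi' hj'; simp only [pA, pB]; split_ifs <;> first | omega | simp_all

lemma alt_nonadj (n x y : ℕ) (hxy : x + 1 < y) (hy : y < n) :
    ¬ Alternates (pw n) (n-1-x) (n-1-y) := by
  rintro ⟨h1, -⟩
  have hx : x < n := by omega
  obtain ⟨k, hk1, hk2, hk3⟩ := h1 (pA x) (pB n x) (pAB_lt n x hx)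
    ((occW n x hx _).mpr (Or.inl rfl)) ((occW n x hx _).mpr (Or.inr rfl))
  have := (occW n y hy k).mp hk3
  revert hk1 hk2 this
  unfold pA pB; split_ifs <;> omega

lemma alt_symm {α : Type*} {w : List α} {a b : α} (h : Alternates w a b) :
    Alternates w b a := ⟨h.2, h.1⟩

lemma alt_iff (n x y : ℕ) (hx : x < n) (hy : y < n) (hne : x ≠ y) :
    Alternates (pw n) (n-1-x) (n-1-y) ↔ (x + 1 = y ∨ y + 1 = x) := by
  constructor
  · intro h
    by_contra hc
    push_neg at hc
    rcases Nat.lt_or_ge x y with hlt | hge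
    · exact alt_nonadj n x y (by omega) hy h
    · exact alt_nonadj n y x (by omega) hx (alt_symm h)
  · rintro (h | h)
    · rw [← h]; exact alt_adj n x (by omega)
    · rw [← h]; exact alt_symm (alt_adj n y (by omega))


lemma avoids (n : ℕ) : Avoids123 (pw n) := by
  rintro ⟨i, j, k, a, b, c, hij, hjk, hi, hj, hk, hab, hbc⟩
  have hik : k < 2*n := by
    have := (List.getElem?_eq_some_iff.mp hk).1
    rwa [pw_len] at this
  have hi' : i < 2*n := by omega
  have hj' : j < 2*n := by omega
  rw [pw_get n i hi'] at hi
  rw [pw_get n j hj'] at hj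
  rw [pw_get n k hik] at hk
  have hn : 1 ≤ n := by omega
  have g1 := pg_lt n i hn hi'
  have g2 := pg_lt n j hn hj'
  have g3 := pg_lt n k hn hik
  have e1 := Option.some_injective _ hi
  have e2 := Option.some_injective _ hj
  have e3 := Option.some_injective _ hk
  have l1 := lemA n i j hij hj'
  have l2 := lemA n i k (by omega) hik
  have l3 := lemA n j k hjk hik
  omega

/-- for every `n ≥ 1`, the path graph `P_n` is 123-representable. -/
theorem stmt_7 (n : ℕ) (hn : 1 ≤ n) : Rep123 (pathG n) := by
  refine ⟨ℕ, inferInstance, fun v => n - 1 - (v : ℕ), ?_, pw n, avoids n, ?_, ?_, ?_⟩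
  · intro a b h
    have ha := a.isLt
    have hb := b.isLt
    have h' : n - 1 - (a : ℕ) = n - 1 - (b : ℕ) := h
    exact Fin.ext (by omega)
  · intro l hl
    simp only [pw, List.mem_map, List.mem_range] at hl
    obtain ⟨p, hp, rfl⟩ := hl
    exact ⟨⟨pg n p, pg_lt n p hn hp⟩, rfl⟩
  · intro v
    have hv := v.isLt
    have h := (occW n (v : ℕ) hv (pA (v : ℕ))).mpr (Or.inl rfl)
    obtain ⟨hlt, heq⟩ := List.getElem?_eq_some_iff.mp h
    show n - 1 - (v : ℕ) ∈ pw n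
    rw [← heq]
    exact List.getElem_mem hlt
  · intro x y hne
    have hval : (x : ℕ) ≠ (y : ℕ) := fun h => hne (Fin.ext h)
    rw [alt_iff n x y x.isLt y.isLt hval]
    simp only [pathG, SimpleGraph.fromRel_adj]
    constructor
    · intro h; exact ⟨hne, h⟩
    · rintro ⟨-, h⟩; exact h
end

section
/- For every n ≥ 3, the cycle graph C_n on vertices 1, 2, …, n (with edges between i and i+1 for 1 ≤ i ≤ n−1 and between n and 1) is 123-representable. -/
/-- The cycle graph `C_n`: vertices `0, …, n-1` (standing for `1, …, n`), with edges between
consecutive vertices `i` and `i+1`, together with the edge between `n-1` and `0` (i.e.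
between `n` and `1`). -/
def cycleG (n : ℕ) : SimpleGraph (Fin n) :=
  SimpleGraph.fromRel (fun i j =>
    (i : ℕ) + 1 = (j : ℕ) ∨ ((i : ℕ) = n - 1 ∧ (j : ℕ) = 0))

section Stmt8Aux

/-- Letter at position `p` of the representing word for `C_n`. -/
def uF (n p : ℕ) : ℕ :=
  if n % 2 = 1 then
    if p % 4 = 0 ∨ p % 4 = 3 then n - 1 - p/4
    else if p % 4 = 1 then (n-1)/2 - p/4
    else (n-1)/2 - 1 - p/4
  else
    if p = 0 then n/2
    else if p = 2*n-1 then n/2 - 1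
    else if p % 4 = 0 then n - p/4
    else if p % 4 = 1 then n - 1 - p/4
    else if p % 4 = 2 then n/2 - 1 - p/4
    else n/2 - 2 - p/4

/-- Label of vertex `i`. -/
def labF (n i : ℕ) : ℕ :=
  if n % 2 = 0 ∧ i = n - 1 then n/2 - 1
  else if i % 2 = 0 then (2*n-2-i)/2 else (n-2-i)/2

/-- First position at which the label of vertex `i` occurs. -/
def pos1 (n i : ℕ) : ℕ :=
  if n % 2 = 1 then (if i = n-1 then 1 else 2*i)
  else (if i = n-2 then 0 else if i = n-1 then 2 else 2*i+1)

/-- Second position at which the label of vertex `i` occurs. -/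
def pos2 (n i : ℕ) : ℕ :=
  if n % 2 = 1 then (if i = n-1 then 2*n-2 else 2*i+3)
  else (if i = n-2 then 2*n-3 else if i = n-1 then 2*n-1 else 2*i+4)

/-- The vertex whose label occupies position `p`. -/
def chordOfF (n p : ℕ) : ℕ :=
  if n % 2 = 1 then
    (if p = 1 then n-1 else if p = 2*n-2 then n-1 else if p % 2 = 0 then p/2 else (p-3)/2)
  else
    (if p = 0 then n-2 else if p = 2*n-3 then n-2 else if p = 2 then n-1
     else if p = 2*n-1 then n-1 else if p % 2 = 1 then (p-1)/2 else (p-4)/2)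

/-- The class (one of two weakly decreasing subsequences) of position `p`. -/
def clasF (n p : ℕ) : Prop :=
  if n % 2 = 1 then (p % 4 = 0 ∨ p % 4 = 3)
  else ((p % 4 ≤ 1 ∧ p ≠ 0) ∨ p = 2*n-1)

set_option maxHeartbeats 2000000 in
lemma poslt (n i : ℕ) (hn : 3 ≤ n) (hi : i < n) :
    pos1 n i < pos2 n i ∧ pos2 n i < 2*n := by
  simp only [pos1, pos2]; split_ifs <;> omega

set_option maxHeartbeats 2000000 in
lemma upos1 (n i : ℕ) (hn : 3 ≤ n) (hi : i < n) : uF n (pos1 n i) = labF n i := by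
  simp only [pos1, labF]
  split_ifs <;> simp only [uF] <;> split_ifs <;> first | omega | simp_all

set_option maxHeartbeats 2000000 in
lemma upos2 (n i : ℕ) (hn : 3 ≤ n) (hi : i < n) : uF n (pos2 n i) = labF n i := by
  simp only [pos2, labF]
  split_ifs <;> simp only [uF] <;> split_ifs <;> first | omega | simp_all

set_option maxHeartbeats 2000000 in
lemma labinj (n i j : ℕ) (hn : 3 ≤ n) (hi : i < n) (hj : j < n)
    (h : labF n i = labF n j) : i = j := by
  simp only [labF] at h; split_ifs at h <;> omega

set_option maxHeartbeats 2000000 in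
lemma occ_s8 (n i p : ℕ) (hn : 3 ≤ n) (hi : i < n) (hp : p < 2*n) :
    uF n p = labF n i ↔ p = pos1 n i ∨ p = pos2 n i := by
  simp only [uF, labF, pos1, pos2]; split_ifs <;> omega

set_option maxHeartbeats 2000000 in
lemma chordlt (n p : ℕ) (hn : 3 ≤ n) (hp : p < 2*n) :
    chordOfF n p < n ∧ (p = pos1 n (chordOfF n p) ∨ p = pos2 n (chordOfF n p)) := by
  simp only [chordOfF, pos1, pos2]; split_ifs <;> omega

set_option maxHeartbeats 2000000 in
lemma mono (n p q : ℕ) (hn : 3 ≤ n) (hpq : p < q) (hq : q < 2*n)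
    (h : clasF n p ↔ clasF n q) : uF n q ≤ uF n p := by
  simp only [clasF] at h
  simp only [uF]
  split_ifs at h ⊢ <;> omega

set_option maxHeartbeats 2000000 in
lemma inter_adj (n x y : ℕ) (hn : 3 ≤ n) (hx : x < n) (hy : y < n) :
    ((pos1 n x < pos1 n y ∧ pos1 n y < pos2 n x ∧ pos2 n x < pos2 n y) ∨
     (pos1 n y < pos1 n x ∧ pos1 n x < pos2 n y ∧ pos2 n y < pos2 n x))
    ↔ (x + 1 = y ∨ y + 1 = x ∨ (x = n-1 ∧ y = 0) ∨ (y = n-1 ∧ x = 0)) := by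
  simp only [pos1, pos2]; split_ifs <;> omega

lemma Wsome (n k v : ℕ) :
    ((List.range (2*n)).map (uF n))[k]? = some v ↔ k < 2*n ∧ uF n k = v := by
  rw [List.getElem?_map]
  rcases Nat.lt_or_ge k (2*n) with h | h
  · rw [List.getElem?_range h]; simp [h]
  · rw [List.getElem?_eq_none (by simpa using h)]; simp; omega

lemma Wavoids (n : ℕ) (hn : 3 ≤ n) : Avoids123 ((List.range (2*n)).map (uF n)) := by
  rintro ⟨i, j, k, a, b, c, hij, hjk, hi, hj, hk, hab, hbc⟩
  rw [Wsome] at hi hj hk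
  obtain ⟨hi1, hi2⟩ := hi
  obtain ⟨hj1, hj2⟩ := hj
  obtain ⟨hk1, hk2⟩ := hk
  rcases Classical.em (clasF n i ↔ clasF n j) with h | h
  · have := mono n i j hn hij hj1 h; omega
  rcases Classical.em (clasF n j ↔ clasF n k) with h2 | h2
  · have := mono n j k hn hjk hk1 h2; omega
  · have h3 : clasF n i ↔ clasF n k := by tauto
    have := mono n i k hn (lt_trans hij hjk) hk1 h3; omega

lemma alt_iff_s8 {w : List ℕ} {x y p1 p2 q1 q2 : ℕ}
    (hxy : x ≠ y) (hp : p1 < p2) (hq : q1 < q2)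
    (hx : ∀ k, w[k]? = some x ↔ (k = p1 ∨ k = p2))
    (hy : ∀ k, w[k]? = some y ↔ (k = q1 ∨ k = q2)) :
    Alternates w x y ↔
      ((p1 < q1 ∧ q1 < p2 ∧ p2 < q2) ∨ (q1 < p1 ∧ p1 < q2 ∧ q2 < p2)) := by
  have hp1 : w[p1]? = some x := (hx p1).mpr (Or.inl rfl)
  have hp2 : w[p2]? = some x := (hx p2).mpr (Or.inr rfl)
  have hq1 : w[q1]? = some y := (hy q1).mpr (Or.inl rfl)
  have hq2 : w[q2]? = some y := (hy q2).mpr (Or.inr rfl)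
  have hgen : ∀ a b : ℕ, w[a]? = some x → w[b]? = some y → a ≠ b := by
    intro a b ha hb h; subst h; rw [ha] at hb
    exact hxy (Option.some.inj hb)
  have hne1 := hgen p1 q1 hp1 hq1
  have hne2 := hgen p1 q2 hp1 hq2
  have hne3 := hgen p2 q1 hp2 hq1
  have hne4 := hgen p2 q2 hp2 hq2
  constructor
  · rintro ⟨h1, h2⟩
    obtain ⟨k, hk1, hk2, hk3⟩ := h1 p1 p2 hp hp1 hp2
    obtain ⟨l, hl1, hl2, hl3⟩ := h2 q1 q2 hq hq1 hq2
    have hk' := (hy k).mp hk3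
    have hl' := (hx l).mp hl3
    omega
  · intro hcase
    constructor
    · intro i j hij hi hj
      have hi' := (hx i).mp hi
      have hj' := (hx j).mp hj
      rcases hcase with ⟨h1,h2,h3⟩|⟨h1,h2,h3⟩
      · exact ⟨q1, by omega, by omega, hq1⟩
      · exact ⟨q2, by omega, by omega, hq2⟩
    · intro i j hij hi hj
      have hi' := (hy i).mp hi
      have hj' := (hy j).mp hj
      rcases hcase with ⟨h1,h2,h3⟩|⟨h1,h2,h3⟩
      · exact ⟨p2, by omega, by omega, hp2⟩
      · exact ⟨p1, by omega, by omega, hp1⟩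

end Stmt8Aux

/-- for every `n ≥ 3`, the cycle graph `C_n` is 123-representable. -/
theorem stmt_8 (n : ℕ) (hn : 3 ≤ n) : Rep123 (cycleG n) := by
  refine ⟨ℕ, inferInstance, fun v => labF n v.val, ?_,
    (List.range (2*n)).map (uF n), Wavoids n hn, ?_, ?_, ?_⟩
  · -- injectivity
    intro a b h
    exact Fin.ext (labinj n a.val b.val hn a.isLt b.isLt h)
  · -- every letter is a label
    intro l hl
    rw [List.mem_map] at hl
    obtain ⟨p, hp, rfl⟩ := hl
    rw [List.mem_range] at hp
    refine ⟨⟨chordOfF n p, (chordlt n p hn hp).1⟩, ?_⟩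
    show labF n (chordOfF n p) = uF n p
    rcases (chordlt n p hn hp).2 with h | h
    · conv_rhs => rw [h]
      exact (upos1 n _ hn (chordlt n p hn hp).1).symm
    · conv_rhs => rw [h]
      exact (upos2 n _ hn (chordlt n p hn hp).1).symm
  · -- every label occurs
    intro v
    rw [List.mem_map]
    exact ⟨pos1 n v.val, List.mem_range.mpr
      (lt_trans (poslt n v.val hn v.isLt).1 (poslt n v.val hn v.isLt).2),
      upos1 n v.val hn v.isLt⟩
  · -- alternation iff adjacency
    intro x y hxy
    have hvne : (x : ℕ) ≠ (y : ℕ) := fun h => hxy (Fin.ext h)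
    have hlabne : labF n x.val ≠ labF n y.val := fun h =>
      hvne (labinj n x.val y.val hn x.isLt y.isLt h)
    have hoccx : ∀ k, ((List.range (2*n)).map (uF n))[k]? = some (labF n x.val) ↔
        (k = pos1 n x.val ∨ k = pos2 n x.val) := by
      intro k
      rw [Wsome]
      constructor
      · rintro ⟨hk, he⟩; exact (occ_s8 n x.val k hn x.isLt hk).mp he
      · rintro (rfl | rfl)
        · exact ⟨lt_trans (poslt n x.val hn x.isLt).1 (poslt n x.val hn x.isLt).2,
            upos1 n x.val hn x.isLt⟩
        · exact ⟨(poslt n x.val hn x.isLt).2, upos2 n x.val hn x.isLt⟩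
    have hoccy : ∀ k, ((List.range (2*n)).map (uF n))[k]? = some (labF n y.val) ↔
        (k = pos1 n y.val ∨ k = pos2 n y.val) := by
      intro k
      rw [Wsome]
      constructor
      · rintro ⟨hk, he⟩; exact (occ_s8 n y.val k hn y.isLt hk).mp he
      · rintro (rfl | rfl)
        · exact ⟨lt_trans (poslt n y.val hn y.isLt).1 (poslt n y.val hn y.isLt).2,
            upos1 n y.val hn y.isLt⟩
        · exact ⟨(poslt n y.val hn y.isLt).2, upos2 n y.val hn y.isLt⟩
    rw [alt_iff_s8 hlabne (poslt n x.val hn x.isLt).1 (poslt n y.val hn y.isLt).1 hoccx hoccy]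
    rw [inter_adj n x.val y.val hn x.isLt y.isLt]
    rw [cycleG, SimpleGraph.fromRel_adj]
    constructor
    · intro h; exact ⟨hxy, by tauto⟩
    · rintro ⟨-, h⟩; tauto
end

section
/- For every n ≥ 1, the path graph P_n on vertices 1, 2, …, n (with edges exactly between i and i+1) can be represented by a 2-uniform 123-avoiding word, possibly after relabeling its vertices. -/
/-- Value at position `p` of the word `0 1 0 2 1 3 2 ... (n-2)(n-1)(n-2)(n-1)` of length `2n`. -/
def gg (n p : ℕ) : ℕ :=
  if p = 2*n - 1 then n - 1 else if p % 2 = 1 then (p+1)/2 else p/2 - 1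

/-- First position of letter `x`. -/
def ggP1 (x : ℕ) : ℕ := if x = 0 then 0 else 2*x - 1

/-- Second position of letter `x`. -/
def ggP2 (n x : ℕ) : ℕ := if x = n - 1 then 2*n - 1 else 2*x + 2

lemma gg_lt (n k : ℕ) (hn : 1 ≤ n) (hk : k < 2*n) : gg n k < n := by
  unfold gg; split_ifs <;> omega

lemma gg_bounds (n k : ℕ) (hk : k < 2*n) : 2 * gg n k ≤ k + 1 ∧ k ≤ 2 * gg n k + 3 := by
  unfold gg; split_ifs <;> omega

lemma gg_eq_iff (n x k : ℕ) (hn : 1 ≤ n) (hk : k < 2*n) (hx : x < n) :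
    gg n k = x ↔ k = ggP1 x ∨ k = ggP2 n x := by
  unfold gg ggP1 ggP2; split_ifs <;> omega

lemma ggP_facts (n x : ℕ) (hn : 1 ≤ n) (hx : x < n) :
    ggP1 x < ggP2 n x ∧ ggP2 n x < 2*n := by
  unfold ggP1 ggP2; split_ifs <;> omega

lemma ggP1_bounds (a : ℕ) : ggP1 a ≤ 2*a ∧ 2*a ≤ ggP1 a + 1 := by
  unfold ggP1; split_ifs <;> omega

lemma ggP1_eq (a : ℕ) (h : a ≠ 0) : ggP1 a = 2*a - 1 := by
  unfold ggP1; split_ifs <;> omega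

lemma ggP2_bounds (n a : ℕ) (h : a < n) : 2*a+1 ≤ ggP2 n a ∧ ggP2 n a ≤ 2*a+2 := by
  unfold ggP2; split_ifs <;> omega

lemma ggP2_eq (n a : ℕ) (h : a + 1 < n) : ggP2 n a = 2*a + 2 := by
  unfold ggP2; split_ifs <;> omega

/-- The word, as a list over `ℕᵒᵈ`. -/
def wwD (n : ℕ) : List ℕᵒᵈ := (List.range (2*n)).map (fun p => OrderDual.toDual (gg n p))

lemma wwD_get (n k : ℕ) (x : ℕᵒᵈ) :
    (wwD n)[k]? = some x ↔ k < 2*n ∧ gg n k = OrderDual.ofDual x := by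
  unfold wwD
  rcases lt_or_ge k (2*n) with h | h
  · rw [List.getElem?_map, List.getElem?_range h]
    simp only [Option.map_some]
    constructor
    · rintro h'; exact ⟨h, by injection h'⟩
    · rintro ⟨-, h2⟩; rw [h2]; rfl
  · rw [List.getElem?_eq_none (by simp; omega)]
    simp; omega


open OrderDual in
lemma wwD_get' (n k a : ℕ) (hn : 1 ≤ n) (ha : a < n) (hk : k < 2*n)
    (h : k = ggP1 a ∨ k = ggP2 n a) : (wwD n)[k]? = some (toDual a) := by
  rw [wwD_get]
  exact ⟨hk, (gg_eq_iff n a k hn hk ha).mpr h⟩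

open OrderDual in
lemma alt_consec (n a : ℕ) (hn : 1 ≤ n) (ha : a + 1 < n) :
    Alternates (wwD n) (toDual a) (toDual (a+1)) := by
  have h2a := ggP2_eq n a ha
  have h1b := ggP1_eq (a+1) (by omega)
  have h1a := ggP1_bounds a
  have h2b := ggP2_bounds n (a+1) ha
  constructor
  · intro i j hij hi hj
    rw [wwD_get] at hi hj
    have hi2 := (gg_eq_iff n a i hn hi.1 (by omega)).mp hi.2
    have hj2 := (gg_eq_iff n a j hn hj.1 (by omega)).mp hj.2
    refine ⟨2*a+1, by omega, by omega, ?_⟩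
    exact wwD_get' n (2*a+1) (a+1) hn ha (by omega) (Or.inl (by omega))
  · intro i j hij hi hj
    rw [wwD_get] at hi hj
    have hi2 := (gg_eq_iff n (a+1) i hn hi.1 ha).mp hi.2
    have hj2 := (gg_eq_iff n (a+1) j hn hj.1 ha).mp hj.2
    refine ⟨2*a+2, by omega, by omega, ?_⟩
    exact wwD_get' n (2*a+2) a hn (by omega) (by omega) (Or.inr (by omega))

open OrderDual in
lemma not_alt (n a b : ℕ) (hn : 1 ≤ n) (hab : a + 2 ≤ b) (hb : b < n) :
    ¬ Alternates (wwD n) (toDual a) (toDual b) := by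
  have h2a := ggP2_eq n a (by omega)
  have h1a := ggP1_bounds a
  have h1b := ggP1_eq b (by omega)
  have h2b := ggP2_bounds n b hb
  rintro ⟨h1, -⟩
  obtain ⟨k, hk1, hk2, hk3⟩ := h1 (ggP1 a) (ggP2 n a) (by omega)
    (wwD_get' n _ a hn (by omega) (by omega) (Or.inl rfl))
    (wwD_get' n _ a hn (by omega) (by omega) (Or.inr rfl))
  rw [wwD_get] at hk3
  have := (gg_eq_iff n b k hn hk3.1 hb).mp hk3.2
  omega

/-- for every `n ≥ 1`, the path graph `P_n` can be represented by a 2-uniform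
123-avoiding word, possibly after relabeling its vertices by elements of a linearly ordered
set. -/
theorem stmt_11 (n : ℕ) (hn : 1 ≤ n) :
    ∃ (L : Type) (inst : LinearOrder L) (f : Fin n → L), Function.Injective f ∧
      ∃ w : List L, @Avoids123 L inst w ∧ TwoUniform w ∧ RepresentsLab (pathG n) f w := by
  refine ⟨ℕᵒᵈ, inferInstance, fun i => OrderDual.toDual (i : ℕ), ?_, wwD n, ?_, ?_, ?_, ?_, ?_⟩
  · intro i j h
    exact Fin.val_injective (OrderDual.toDual.injective h)
  · -- Avoids123
    rintro ⟨i, j, k, a, b, c, hij, hjk, hi, hj, hk, hab, hbc⟩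
    rw [wwD_get] at hi hj hk
    have hab' : OrderDual.ofDual b < OrderDual.ofDual a := hab
    have hbc' : OrderDual.ofDual c < OrderDual.ofDual b := hbc
    have Bi := gg_bounds n i hi.1
    have Bj := gg_bounds n j hj.1
    have Bk := gg_bounds n k hk.1
    have e1 := hi.2; have e2 := hj.2; have e3 := hk.2
    omega
  · -- TwoUniform
    intro x hx
    obtain ⟨p, hp, hpx⟩ := List.mem_map.mp hx
    rw [List.mem_range] at hp
    have hx' : x = OrderDual.toDual (OrderDual.ofDual x) := rfl
    set a := OrderDual.ofDual x with hA
    have ha : a < n := by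
      have : gg n p = a := congrArg OrderDual.ofDual hpx
      rw [← this]; exact gg_lt n p hn hp
    have hf := ggP_facts n a hn ha
    refine ⟨ggP1 a, ggP2 n a, by omega, ?_, ?_, ?_⟩
    · rw [hx']; exact wwD_get' n _ a hn ha (by omega) (Or.inl rfl)
    · rw [hx']; exact wwD_get' n _ a hn ha (by omega) (Or.inr rfl)
    · intro k hk
      rw [hx', wwD_get] at hk
      exact (gg_eq_iff n a k hn hk.1 ha).mp hk.2
  · -- every letter is a label
    intro l hl
    obtain ⟨p, hp, hpl⟩ := List.mem_map.mp hl
    rw [List.mem_range] at hp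
    exact ⟨⟨gg n p, gg_lt n p hn hp⟩, hpl⟩
  · -- every label occurs
    intro v
    have hf := ggP_facts n (v : ℕ) hn v.isLt
    have : (wwD n)[ggP1 (v : ℕ)]? = some (OrderDual.toDual (v : ℕ)) :=
      wwD_get' n _ (v : ℕ) hn v.isLt (by omega) (Or.inl rfl)
    exact List.mem_of_getElem? this
  · -- alternation iff adjacency
    intro x y hxy
    simp only [pathG, SimpleGraph.fromRel_adj]
    have hxy' : (x : ℕ) ≠ (y : ℕ) := fun h => hxy (Fin.val_injective h)
    have hxlt := x.isLt; have hylt := y.isLt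
    constructor
    · intro halt
      refine ⟨hxy, ?_⟩
      by_contra hc
      push_neg at hc
      rcases lt_or_gt_of_ne hxy' with h | h
      · exact not_alt n (x : ℕ) (y : ℕ) hn (by omega) y.isLt halt
      · exact not_alt n (y : ℕ) (x : ℕ) hn (by omega) x.isLt ⟨halt.2, halt.1⟩
    · rintro ⟨-, h | h⟩
      · have := alt_consec n (x : ℕ) hn (by omega)
        rwa [h] at this
      · have := alt_consec n (y : ℕ) hn (by omega)
        rw [h] at this
        exact ⟨this.2, this.1⟩
end

section
/- Every finite tree can be represented by a 2-uniform 132-avoiding word, possibly after relabeling its vertices by elements of a linearly ordered set. -/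
namespace Stmt13

/-- first occurrences are decreasing -/
def FD (w : List ℚ) : Prop :=
  ∀ (i j : ℕ) (a b : ℚ), i < j → w[i]? = some a → w[j]? = some b →
    (∀ k, k < j → w[k]? ≠ some b) → b < a

lemma alt_symm {α : Type*} {w : List α} {x y : α} (h : Alternates w x y) :
    Alternates w y x := ⟨h.2, h.1⟩

section Insert

variable {A B : List ℚ} {u c : ℚ}

local notation "p" => A.length
local notation "old" => A ++ c :: B
local notation "new" => A ++ u :: c :: u :: B

/-- index embedding from old word into new word -/
def em (n i : ℕ) : ℕ := if i < n then i else if i = n then n + 1 else i + 2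

lemma em_lt_iff {n i j : ℕ} : em n i < em n j ↔ i < j := by
  unfold em; split_ifs <;> omega

lemma em_inj {n i j : ℕ} (h : em n i = em n j) : i = j := by
  unfold em at h; split_ifs at h <;> omega

lemma oldget_lt {i : ℕ} (h : i < p) : (old)[i]? = A[i]? :=
  List.getElem?_append_left h

lemma oldget_p : (old)[p]? = some c := by
  rw [List.getElem?_append_right le_rfl]; simp

lemma oldget_gt {k : ℕ} : (old)[p + 1 + k]? = B[k]? := by
  rw [List.getElem?_append_right (by omega)]
  have : p + 1 + k - p = k + 1 := by omega
  rw [this, List.getElem?_cons_succ]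

lemma newget_lt {i : ℕ} (h : i < p) : (new)[i]? = A[i]? :=
  List.getElem?_append_left h

lemma newget_p : (new)[p]? = some u := by
  rw [List.getElem?_append_right le_rfl]; simp

lemma newget_p1 : (new)[p + 1]? = some c := by
  rw [List.getElem?_append_right (by omega)]
  have : p + 1 - p = 1 := by omega
  rw [this]; simp

lemma newget_p2 : (new)[p + 2]? = some u := by
  rw [List.getElem?_append_right (by omega)]
  have : p + 2 - p = 2 := by omega
  rw [this]; simp

lemma newget_gt {k : ℕ} : (new)[p + 3 + k]? = B[k]? := by
  rw [List.getElem?_append_right (by omega)]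
  have : p + 3 + k - p = k + 3 := by omega
  rw [this]
  show (u :: c :: u :: B)[k+3]? = B[k]?
  simp

lemma occ_fwd {i : ℕ} {x : ℚ} (h : (old)[i]? = some x) :
    (new)[em p i]? = some x := by
  unfold em
  rcases lt_trichotomy i p with hi | hi | hi
  · rw [if_pos hi, newget_lt hi, ← oldget_lt hi]; exact h
  · subst hi
    rw [if_neg (lt_irrefl _), if_pos rfl, newget_p1, ← oldget_p]; exact h
  · rw [if_neg (by omega), if_neg (by omega)]
    obtain ⟨k, rfl⟩ : ∃ k, i = p + 1 + k := ⟨i - p - 1, by omega⟩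
    have : p + 1 + k + 2 = p + 3 + k := by omega
    rw [this, newget_gt, ← oldget_gt]; exact h

lemma occ_bwd {j : ℕ} {x : ℚ} (hx : x ≠ u) (h : (new)[j]? = some x) :
    ∃ i, em p i = j ∧ (old)[i]? = some x := by
  rcases lt_trichotomy j p with hj | hj | hj
  · exact ⟨j, by unfold em; rw [if_pos hj], by rw [oldget_lt hj, ← newget_lt hj]; exact h⟩
  · exfalso; subst hj; rw [newget_p] at h; exact hx (Option.some_injective _ h).symm
  · rcases Nat.lt_or_ge j (p + 2) with hj2 | hj2
    · have hj1 : j = p + 1 := by omega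
      subst hj1
      exact ⟨p, by unfold em; simp, by rw [oldget_p, ← newget_p1]; exact h⟩
    · rcases Nat.eq_or_lt_of_le hj2 with hj3 | hj3
      · exfalso; rw [← hj3, newget_p2] at h
        exact hx (Option.some_injective _ h).symm
      · obtain ⟨k, rfl⟩ : ∃ k, j = p + 3 + k := ⟨j - p - 3, by omega⟩
        refine ⟨p + 1 + k, by unfold em; rw [if_neg (by omega), if_neg (by omega)]; omega, ?_⟩
        rw [oldget_gt, ← newget_gt]; exact h

end Insert


lemma mem_of_get {l : List ℚ} {i : ℕ} {x : ℚ} (h : l[i]? = some x) : x ∈ l := by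
  obtain ⟨h1, h2⟩ := List.getElem?_eq_some_iff.1 h
  exact h2 ▸ List.getElem_mem h1

/-- The first clause of `Alternates`. -/
def Alt1 {α : Type*} (w : List α) (x z : α) : Prop :=
  ∀ i j : ℕ, i < j → w[i]? = some x → w[j]? = some x →
    ∃ k : ℕ, i < k ∧ k < j ∧ w[k]? = some z

lemma alternates_eq_alt1 {α : Type*} (w : List α) (x z : α) :
    Alternates w x z ↔ Alt1 w x z ∧ Alt1 w z x := Iff.rfl

section Insert2

variable {A B : List ℚ} {u c : ℚ}

local notation "p" => A.length
local notation "old" => A ++ c :: B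
local notation "new" => A ++ u :: c :: u :: B

lemma alt1_iff {x z : ℚ} (hx : x ≠ u) (hz : z ≠ u) :
    Alt1 (new) x z ↔ Alt1 (old) x z := by
  constructor
  · intro h i j hij gi gj
    obtain ⟨k, hk1, hk2, gk⟩ := h (em p i) (em p j) (em_lt_iff.2 hij) (occ_fwd gi) (occ_fwd gj)
    obtain ⟨m, hm, gm⟩ := occ_bwd hz gk
    exact ⟨m, em_lt_iff.1 (by rw [hm]; exact hk1), em_lt_iff.1 (by rw [hm]; exact hk2), gm⟩
  · intro h i j hij gi gj
    obtain ⟨i', hi', gi'⟩ := occ_bwd hx gi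
    obtain ⟨j', hj', gj'⟩ := occ_bwd hx gj
    obtain ⟨k, hk1, hk2, gk⟩ := h i' j' (em_lt_iff.1 (by rw [hi', hj']; exact hij)) gi' gj'
    exact ⟨em p k, by rw [← hi']; exact em_lt_iff.2 hk1,
      by rw [← hj']; exact em_lt_iff.2 hk2, occ_fwd gk⟩

lemma alt_iff {x z : ℚ} (hx : x ≠ u) (hz : z ≠ u) :
    Alternates (new) x z ↔ Alternates (old) x z :=
  and_congr (alt1_iff hx hz) (alt1_iff hz hx)

lemma c_mem_old : c ∈ (old) := mem_of_get (oldget_p (A := A) (B := B))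

lemma occ_u (hu : u ∉ (old)) {j : ℕ} (h : (new)[j]? = some u) : j = p ∨ j = p + 2 := by
  rcases lt_trichotomy j p with h1 | h1 | h1
  · exfalso; rw [newget_lt h1] at h
    exact hu (List.mem_append.2 (Or.inl (mem_of_get h)))
  · exact Or.inl h1
  · by_cases h2 : j = p + 1
    · exfalso; subst h2; rw [newget_p1] at h
      have hcu2 : c = u := Option.some_injective _ h
      exact hu (hcu2 ▸ c_mem_old)
    · by_cases h3 : j = p + 2
      · exact Or.inr h3
      · exfalso
        obtain ⟨k, rfl⟩ : ∃ k, j = p + 3 + k := ⟨j - p - 3, by omega⟩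
        rw [newget_gt] at h
        exact hu (List.mem_append.2 (Or.inr (List.mem_cons.2 (Or.inr (mem_of_get h)))))

lemma exists_q (hTU : TwoUniform (old)) (hcA : c ∉ A) :
    ∃ q, p < q ∧ (old)[q]? = some c ∧ ∀ k, (old)[k]? = some c → k = p ∨ k = q := by
  obtain ⟨i, j, hij, gi, gj, hall⟩ := hTU c c_mem_old
  have hp := hall p oldget_p
  have hq : ∀ q, (old)[q]? = some c → q ≠ p → p < q := by
    intro q gq hqp
    rcases lt_or_gt_of_ne hqp with h | h
    · exact absurd (mem_of_get (by rw [← oldget_lt h]; exact gq)) hcA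
    · exact h
  rcases hp with rfl | rfl
  · exact ⟨j, hq j gj (Ne.symm hij), gj, hall⟩
  · refine ⟨i, hq i gi hij, gi, fun k hk => (hall k hk).symm⟩

lemma alt_uc (hu : u ∉ (old)) (hTU : TwoUniform (old)) (hcA : c ∉ A) :
    Alternates (new) u c := by
  obtain ⟨q, hpq, gq, hallc⟩ := exists_q hTU hcA
  have hcu' : c ≠ u := fun h => hu (h ▸ c_mem_old)
  have key : ∀ m, (new)[m]? = some c → m = p + 1 ∨ m = q + 2 := by
    intro m gm
    obtain ⟨i', hi', gi'⟩ := occ_bwd hcu' gm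
    rcases hallc i' gi' with rfl | rfl
    · left; rw [← hi']; unfold em; simp
    · right; rw [← hi']; unfold em; rw [if_neg (by omega), if_neg (by omega)]
  constructor
  · intro i j hij gi gj
    have hi := occ_u hu gi
    have hj := occ_u hu gj
    exact ⟨p + 1, by omega, by omega, newget_p1⟩
  · intro i j hij gi gj
    have hi := key i gi
    have hj := key j gj
    exact ⟨p + 2, by omega, by omega, newget_p2⟩

lemma alt_u_other {z : ℚ} (h : Alternates (new) u z) : z = c := by
  obtain ⟨k, hk1, hk2, gk⟩ := h.1 p (p + 2) (by omega) newget_p newget_p2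
  have hk : k = p + 1 := by omega
  subst hk
  rw [newget_p1] at gk
  exact (Option.some_injective _ gk).symm

lemma TU_new (hu : u ∉ (old)) (hTU : TwoUniform (old)) : TwoUniform (new) := by
  intro x hx
  rcases eq_or_ne x u with rfl | hxu
  · exact ⟨p, p + 2, by omega, newget_p, newget_p2, fun k gk => occ_u hu gk⟩
  · have hxold : x ∈ (old) := by
      simp only [List.mem_append, List.mem_cons] at hx ⊢
      rcases hx with h | h | h | h | h
      · exact Or.inl h
      · exact absurd h hxu
      · exact Or.inr (Or.inl h)
      · exact absurd h hxu
      · exact Or.inr (Or.inr h)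
    obtain ⟨i, j, hij, gi, gj, hall⟩ := hTU x hxold
    refine ⟨em p i, em p j, fun h => hij (em_inj h), occ_fwd gi, occ_fwd gj, ?_⟩
    intro k gk
    obtain ⟨m, hm, gm⟩ := occ_bwd hxu gk
    rcases hall m gm with rfl | rfl
    · exact Or.inl hm.symm
    · exact Or.inr hm.symm

lemma mem_new {x : ℚ} : x ∈ (new) ↔ x ∈ (old) ∨ x = u := by
  simp only [List.mem_append, List.mem_cons]
  tauto

lemma noc_before (hcA : c ∉ A) : ∀ k, k < p → (old)[k]? ≠ some c := by
  intro k hk g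
  exact hcA (mem_of_get (by rw [← oldget_lt hk]; exact g))

lemma FD_new (hFD : FD (old)) (hcA : c ∉ A) (hgap : ∀ m ∈ (old), m ≤ c ∨ u < m)
    (hcu : c < u) (hu : u ∉ (old)) : FD (new) := by
  intro i j a b hij gi gj hfirst
  by_cases hjp : j = p
  · subst hjp
    rw [newget_p] at gj
    have hb : b = u := (Option.some_injective _ gj).symm
    have gi' : (old)[i]? = some a := by rw [oldget_lt hij, ← newget_lt hij]; exact gi
    have hca : c < a := hFD i p a c hij gi' oldget_p (noc_before hcA)
    rcases hgap a (mem_of_get gi') with h | h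
    · linarith
    · rw [hb]; exact h
  · by_cases hjp2 : j = p + 2
    · subst hjp2
      rw [newget_p2] at gj
      have hb : u = b := Option.some_injective _ gj
      exact absurd (hb ▸ newget_p) (hfirst p (by omega))
    · have hbu : b ≠ u := by
        rintro rfl
        rcases occ_u hu gj with h | h
        · exact hjp h
        · exact hjp2 h
      obtain ⟨m, hm, gjold⟩ := occ_bwd hbu gj
      have hnofwd : ∀ k, k < m → (old)[k]? ≠ some b := by
        intro k hk g
        exact hfirst (em p k) (by rw [← hm]; exact em_lt_iff.2 hk) (occ_fwd g)
      by_cases hip : i = p ∨ i = p + 2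
      · have hgu : (new)[i]? = some u := by
          rcases hip with rfl | rfl
          · exact newget_p
          · exact newget_p2
        rw [hgu] at gi
        have ha : a = u := (Option.some_injective _ gi).symm
        have hi' : p ≤ i := by rcases hip with rfl | rfl <;> omega
        have hj1 : j = p + 1 ∨ p + 3 ≤ j := by omega
        rcases hj1 with rfl | hj3
        · have hmp : m = p := by unfold em at hm; split_ifs at hm <;> omega
          rw [hmp, oldget_p] at gjold
          have hb : c = b := Option.some_injective _ gjold
          rw [ha, ← hb]; exact hcu
        · have hpm : p < m := by unfold em at hm; split_ifs at hm <;> omega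
          have hbc : b < c := hFD p m c b hpm oldget_p gjold hnofwd
          rw [ha]; linarith
      · push_neg at hip
        have hau : a ≠ u := by
          rintro rfl
          rcases occ_u hu gi with h | h
          · exact hip.1 h
          · exact hip.2 h
        obtain ⟨l, hl, giold⟩ := occ_bwd hau gi
        have hlm : l < m := em_lt_iff.1 (by rw [hl, hm]; exact hij)
        exact hFD l m a b hlm giold gjold hnofwd

lemma Av_new (hAv : Avoids132 (old)) (hFD : FD (old)) (hcA : c ∉ A)
    (hgap : ∀ m ∈ (old), m ≤ c ∨ u < m) (hcu : c < u) (hu : u ∉ (old)) :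
    Avoids132 (new) := by
  rintro ⟨i, j, k, a, b, d, hij, hjk, gi, gj, gk, had, hdb⟩
  have vspec : ∀ (n : ℕ) (x : ℚ), (n = p ∨ n = p + 2) → (new)[n]? = some x → x = u := by
    intro n x hn g
    rcases hn with rfl | rfl
    · rw [newget_p] at g; exact (Option.some_injective _ g).symm
    · rw [newget_p2] at g; exact (Option.some_injective _ g).symm
  have vnon : ∀ (n : ℕ) (x : ℚ), ¬(n = p ∨ n = p + 2) → (new)[n]? = some x →
      ∃ m, em p m = n ∧ (old)[m]? = some x := by
    intro n x hn g
    have hxu : x ≠ u := by rintro rfl; exact hn (occ_u hu g)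
    exact occ_bwd hxu g
  by_cases hi : i = p ∨ i = p + 2 <;> by_cases hj : j = p ∨ j = p + 2 <;>
    by_cases hk : k = p ∨ k = p + 2
  · have h1 := vspec _ _ hi gi; have h2 := vspec _ _ hj gj; subst h1; subst h2; linarith
  · have h1 := vspec _ _ hi gi; have h2 := vspec _ _ hj gj; subst h1; subst h2; linarith
  · have h1 := vspec _ _ hi gi; have h2 := vspec _ _ hk gk; subst h1; subst h2; linarith
  · -- only i special
    have ha := vspec _ _ hi gi
    subst ha
    obtain ⟨mj, hmj, gj'⟩ := vnon _ _ hj gj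
    obtain ⟨mk, hmk, gk'⟩ := vnon _ _ hk gk
    have hcd : c < d := by
      rcases hgap d (mem_of_get gk') with h | h <;> linarith
    have hcb : c < b := by
      rcases hgap b (mem_of_get gj') with h | h <;> linarith
    have hi' : p ≤ i := by rcases hi with rfl | rfl <;> omega
    have hpmj : p < mj := by
      rcases lt_trichotomy mj p with h | h | h
      · exfalso
        have : em p mj = mj := by unfold em; rw [if_pos h]
        omega
      · exfalso
        have hem : em p mj = p + 1 := by unfold em; rw [if_neg (by omega), if_pos h]
        rw [h, oldget_p] at gj'
        have : c = b := Option.some_injective _ gj'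
        linarith
      · exact h
    have hmjk : mj < mk := em_lt_iff.1 (by rw [hmj, hmk]; exact hjk)
    exact hAv ⟨p, mj, mk, c, b, d, hpmj, hmjk, oldget_p, gj', gk', hcd, hdb⟩
  · have h1 := vspec _ _ hj gj; have h2 := vspec _ _ hk gk; subst h1; subst h2; linarith
  · -- only j special
    have hb := vspec _ _ hj gj
    subst hb
    obtain ⟨mi, hmi, gi'⟩ := vnon _ _ hi gi
    obtain ⟨mk, hmk, gk'⟩ := vnon _ _ hk gk
    have hdc : d ≤ c := by
      rcases hgap d (mem_of_get gk') with h | h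
      · exact h
      · linarith
    have hi' : i < p ∨ i = p + 1 := by
      rcases hj with rfl | rfl <;> push_neg at hi <;> omega
    rcases hi' with hip | hip
    · have hmi' : mi = i := by unfold em at hmi; split_ifs at hmi <;> omega
      have gi'' : (old)[i]? = some a := hmi' ▸ gi'
      have hca : c < a := hFD i p a c hip gi'' oldget_p (noc_before hcA)
      linarith
    · subst hip
      have hmi0 : mi = p := by unfold em at hmi; split_ifs at hmi <;> omega
      rw [hmi0, oldget_p] at gi'
      have : c = a := Option.some_injective _ gi'
      linarith
  · -- only k special
    have hd := vspec _ _ hk gk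
    subst hd
    obtain ⟨mi, hmi, gi'⟩ := vnon _ _ hi gi
    obtain ⟨mj, hmj, gj'⟩ := vnon _ _ hj gj
    have hj' : j < p ∨ j = p + 1 := by
      rcases hk with rfl | rfl <;> push_neg at hj <;> omega
    rcases hj' with hjp | hjp
    · have hmi' : mi = i := by unfold em at hmi; split_ifs at hmi <;> omega
      have gi'' : (old)[i]? = some a := hmi' ▸ gi'
      have hca : c < a := hFD i p a c (by omega) gi'' oldget_p (noc_before hcA)
      rcases hgap a (mem_of_get gi'') with h | h <;> linarith
    · subst hjp
      have hmj0 : mj = p := by unfold em at hmj; split_ifs at hmj <;> omega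
      rw [hmj0, oldget_p] at gj'
      have : c = b := Option.some_injective _ gj'
      linarith
  · -- none special
    obtain ⟨mi, hmi, gi'⟩ := vnon _ _ hi gi
    obtain ⟨mj, hmj, gj'⟩ := vnon _ _ hj gj
    obtain ⟨mk, hmk, gk'⟩ := vnon _ _ hk gk
    exact hAv ⟨mi, mj, mk, a, b, d,
      em_lt_iff.1 (by rw [hmi, hmj]; exact hij),
      em_lt_iff.1 (by rw [hmj, hmk]; exact hjk), gi', gj', gk', had, hdb⟩

end Insert2

lemma exists_first_split {c : ℚ} : ∀ {w : List ℚ}, c ∈ w →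
    ∃ A B, w = A ++ c :: B ∧ c ∉ A := by
  intro w hw
  induction w with
  | nil => simp at hw
  | cons a t ih =>
    rcases eq_or_ne a c with rfl | hac
    · exact ⟨[], t, rfl, List.not_mem_nil⟩
    · have hct : c ∈ t := by
        rcases List.mem_cons.1 hw with h | h
        · exact absurd h.symm hac
        · exact h
      obtain ⟨A, B, rfl, hcA⟩ := ih hct
      exact ⟨a :: A, B, rfl, by
        simp only [List.mem_cons, not_or]
        exact ⟨Ne.symm hac, hcA⟩⟩

/-- The word-level induction step. -/
lemma step_word {w' : List ℚ} {c u : ℚ} (hc : c ∈ w') (hcu : c < u)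
    (hgap : ∀ m ∈ w', m ≤ c ∨ u < m)
    (hTU : TwoUniform w') (hFD : FD w') (hAv : Avoids132 w') :
    ∃ w : List ℚ, TwoUniform w ∧ FD w ∧ Avoids132 w ∧
      (∀ x : ℚ, x ∈ w ↔ x ∈ w' ∨ x = u) ∧
      (∀ x z : ℚ, x ≠ u → z ≠ u → (Alternates w x z ↔ Alternates w' x z)) ∧
      Alternates w u c ∧ (∀ z : ℚ, Alternates w u z → z = c) := by
  have hu : u ∉ w' := by
    intro hmem
    rcases hgap u hmem with h | h
    · linarith
    · exact lt_irrefl u h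
  obtain ⟨A, B, rfl, hcA⟩ := exists_first_split hc
  refine ⟨A ++ u :: c :: u :: B, TU_new hu hTU, FD_new hFD hcA hgap hcu hu,
    Av_new hAv hFD hcA hgap hcu hu, fun x => mem_new, fun x z hx hz => alt_iff hx hz,
    alt_uc hu hTU hcA, fun z h => alt_u_other h⟩
end Stmt13

open SimpleGraph

namespace Stmt13G

lemma exists_leaf {V : Type*} [Fintype V] {G : SimpleGraph V} (hG : G.IsTree)
    (h2 : 1 < Fintype.card V) : ∃ x y : V, G.Adj x y ∧ ∀ z, G.Adj x z → z = y := by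
  classical
  set N := Fintype.card V with hN
  set P : ℕ → Prop := fun n => ∃ (a b : V) (q : G.Walk a b), q.IsPath ∧ q.length = n with hP
  have hPle : ∀ m, P m → m < N := by
    rintro m ⟨a, b, q, hq, rfl⟩
    exact hq.length_lt
  obtain ⟨a0, b0, hab⟩ : ∃ a b : V, a ≠ b := Fintype.exists_pair_of_one_lt_card h2
  obtain ⟨q0⟩ := hG.isConnected.preconnected a0 b0
  set q1 := q0.toPath with hq1
  have hP1 : P q1.1.length := ⟨a0, b0, q1.1, q1.2, rfl⟩
  have h1len : 1 ≤ q1.1.length := by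
    by_contra hh
    push_neg at hh
    exact hab (SimpleGraph.Walk.eq_of_length_eq_zero (p := q1.1) (by omega))
  set n := Nat.findGreatest P N with hn
  have hPn : P n := Nat.findGreatest_spec (le_of_lt (hPle _ hP1)) hP1
  have hmax : ∀ m, P m → m ≤ n := by
    intro m hm
    by_contra hmn
    push_neg at hmn
    exact (Nat.findGreatest_is_greatest hmn (le_of_lt (hPle m hm))) hm
  have hn1 : 1 ≤ n := le_trans h1len (hmax _ hP1)
  obtain ⟨a, b, q, hq, hlen⟩ := hPn
  have hrp : q.reverse.IsPath := hq.reverse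
  have hrlen : q.reverse.length = n := by rw [SimpleGraph.Walk.length_reverse, hlen]
  have hadj : G.Adj b (q.reverse.getVert 1) := by
    have := q.reverse.adj_getVert_succ (i := 0) (by omega)
    simpa using this
  refine ⟨b, q.reverse.getVert 1, hadj, ?_⟩
  intro z hz
  have hzs : z ∈ q.reverse.support := by
    by_contra hzs
    have hs : (SimpleGraph.Walk.cons hz.symm q.reverse).IsPath := by
      rw [SimpleGraph.Walk.cons_isPath_iff]
      exact ⟨hrp, hzs⟩
    have hle := hmax _ ⟨z, a, _, hs, rfl⟩
    rw [SimpleGraph.Walk.length_cons, hrlen] at hle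
    omega
  have ht : (q.reverse.takeUntil z hzs).IsPath := hrp.takeUntil hzs
  have he : (SimpleGraph.Walk.cons hz SimpleGraph.Walk.nil : G.Walk b z).IsPath := by
    simp [SimpleGraph.Walk.cons_isPath_iff, hz.ne]
  have hEq : (⟨q.reverse.takeUntil z hzs, ht⟩ : G.Path b z) =
      ⟨SimpleGraph.Walk.cons hz SimpleGraph.Walk.nil, he⟩ :=
    hG.IsAcyclic.path_unique _ _
  have hEq' : q.reverse.takeUntil z hzs = SimpleGraph.Walk.cons hz SimpleGraph.Walk.nil :=
    congrArg Subtype.val hEq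
  have hspec := q.reverse.take_spec hzs
  have : q.reverse.getVert 1 = z := by
    conv_lhs => rw [← hspec, hEq']
    simp [SimpleGraph.Walk.cons_append, SimpleGraph.Walk.nil_append,
      SimpleGraph.Walk.getVert_cons_succ, SimpleGraph.Walk.getVert_zero]
  exact this.symm

lemma leaf_not_mem_support {V : Type*} {G : SimpleGraph V} (_hG : G.IsTree) {x y : V}
    (hleaf : ∀ z, G.Adj x z → z = y) {a b : V} (ha : a ≠ x) (hb : b ≠ x)
    {q : G.Walk a b} (hq : q.IsPath) : x ∉ q.support := by
  classical
  intro hx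
  have ht : (q.takeUntil x hx).IsPath := hq.takeUntil hx
  have hd : (q.dropUntil x hx).IsPath := hq.dropUntil hx
  have htl : 1 ≤ (q.takeUntil x hx).length := by
    by_contra h
    push_neg at h
    exact ha (SimpleGraph.Walk.eq_of_length_eq_zero (p := q.takeUntil x hx) (by omega))
  have hdl : 1 ≤ (q.dropUntil x hx).length := by
    by_contra h
    push_neg at h
    exact hb (SimpleGraph.Walk.eq_of_length_eq_zero (p := q.dropUntil x hx) (by omega)).symm
  have h1 : G.Adj x ((q.takeUntil x hx).reverse.getVert 1) := by
    have := (q.takeUntil x hx).reverse.adj_getVert_succ (i := 0)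
      (by rw [SimpleGraph.Walk.length_reverse]; omega)
    simpa using this
  have hyt : y ∈ (q.takeUntil x hx).support := by
    have heq := hleaf _ h1
    have hmem : (q.takeUntil x hx).reverse.getVert 1 ∈ (q.takeUntil x hx).reverse.support := by
      rw [SimpleGraph.Walk.mem_support_iff_exists_getVert]
      exact ⟨1, rfl, by rw [SimpleGraph.Walk.length_reverse]; omega⟩
    rw [heq, SimpleGraph.Walk.support_reverse, List.mem_reverse] at hmem
    exact hmem
  have h2 : G.Adj x ((q.dropUntil x hx).getVert 1) := by
    have := (q.dropUntil x hx).adj_getVert_succ (i := 0) (by omega)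
    simpa using this
  have hyd : y ∈ (q.dropUntil x hx).support.tail := by
    have heq := hleaf _ h2
    have hmem : (q.dropUntil x hx).getVert 1 ∈ (q.dropUntil x hx).support := by
      rw [SimpleGraph.Walk.mem_support_iff_exists_getVert]
      exact ⟨1, rfl, by omega⟩
    rw [heq] at hmem
    have hyx : y ≠ x := (heq ▸ h2).ne'
    rw [SimpleGraph.Walk.support_eq_cons] at hmem
    rcases List.mem_cons.1 hmem with h | h
    · exact absurd h hyx
    · exact h
  have hspec := q.take_spec hx
  have hnodup := hq.support_nodup
  rw [← hspec, SimpleGraph.Walk.support_append] at hnodup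
  exact (List.disjoint_of_nodup_append hnodup) hyt hyd

lemma lift_reach {V : Type*} {G : SimpleGraph V} {x : V} :
    ∀ {a b : V} (q : G.Walk a b), x ∉ q.support → ∀ (ha : a ≠ x) (hb : b ≠ x),
      (G.comap (Subtype.val : {v : V // v ≠ x} → V)).Reachable ⟨a, ha⟩ ⟨b, hb⟩ := by
  intro a b q
  induction q with
  | nil => exact fun _ _ _ => Reachable.refl _
  | @cons a v b h q' ih =>
    intro hx ha hb
    rw [SimpleGraph.Walk.support_cons] at hx
    have hxq : x ∉ q'.support := fun hh => hx (List.mem_cons_of_mem _ hh)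
    have hv : v ≠ x := fun hh => hx (List.mem_cons_of_mem _ (hh ▸ q'.start_mem_support))
    have hadj : (G.comap (Subtype.val : {v : V // v ≠ x} → V)).Adj ⟨a, ha⟩ ⟨v, hv⟩ := h
    exact (hadj.reachable).trans (ih hxq hv hb)

end Stmt13G


namespace Stmt13

open SimpleGraph

lemma alt_comm {α : Type*} {w : List α} {x y : α} :
    Alternates w x y ↔ Alternates w y x :=
  ⟨fun h => ⟨h.2, h.1⟩, fun h => ⟨h.2, h.1⟩⟩

lemma key (n : ℕ) : ∀ {V : Type*} [Fintype V] (G : SimpleGraph V), G.IsTree →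
    Fintype.card V = n →
    ∃ f : V → ℚ, Function.Injective f ∧ ∃ w : List ℚ,
      Avoids132 w ∧ TwoUniform w ∧ Stmt13.FD w ∧ RepresentsLab G f w := by
  induction n using Nat.strong_induction_on with
  | _ n IH =>
  intro V _ G hG hcard
  rcases Nat.lt_or_ge n 2 with hn2 | hn2
  · -- base case : n = 1
    have hne : Nonempty V := hG.isConnected.nonempty
    have h0 : 0 < Fintype.card V := Fintype.card_pos
    have h1 : Fintype.card V = 1 := by omega
    obtain ⟨v0, hv0⟩ := Fintype.card_eq_one_iff.1 h1
    refine ⟨fun _ => 0, fun a b _ => (hv0 a).trans (hv0 b).symm, [0, 0],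
      ?_, ?_, ?_, ?_, ?_, ?_⟩
    · rintro ⟨i, j, k, a, b, c, hij, hjk, -, -, gk, -, -⟩
      have hk : k < 2 := by
        have := (List.getElem?_eq_some_iff.1 gk).1
        simpa using this
      omega
    · intro x hx
      have hx0 : x = 0 := by simpa using hx
      subst hx0
      refine ⟨0, 1, by omega, by simp, by simp, ?_⟩
      intro k gk
      have hk : k < 2 := by
        have := (List.getElem?_eq_some_iff.1 gk).1
        simpa using this
      omega
    · intro i j a b hij gi gj hfirst
      have hj : j < 2 := by
        have := (List.getElem?_eq_some_iff.1 gj).1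
        simpa using this
      have hi0 : i = 0 := by omega
      have hj1 : j = 1 := by omega
      subst hi0; subst hj1
      have hb : b = 0 := by
        simp only [List.getElem?_cons_succ, List.getElem?_cons_zero] at gj
        exact (Option.some_injective _ gj).symm
      exact absurd (show ([0, 0] : List ℚ)[0]? = some b by rw [hb]; simp)
        (hfirst 0 (by omega))
    · intro l hl
      have : l = 0 := by simpa using hl
      exact ⟨v0, this.symm⟩
    · intro v; simp
    · intro a b hab
      exact absurd ((hv0 a).trans (hv0 b).symm) hab
  · -- inductive step : n ≥ 2
    haveI : DecidableEq V := Classical.decEq V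
    obtain ⟨x, y, hadj, hleaf⟩ := Stmt13G.exists_leaf hG (by omega)
    have hyx : y ≠ x := hadj.ne'
    have hcard' : Fintype.card {v : V // v ≠ x} = n - 1 := by
      have e1 : Fintype.card {v : V // ¬ v = x} =
          Fintype.card V - Fintype.card {v : V // v = x} :=
        Fintype.card_subtype_compl _
      have e2 : Fintype.card {v : V // v = x} = 1 := Fintype.card_subtype_eq x
      rw [e2] at e1
      have : Fintype.card {v : V // ¬ v = x} = Fintype.card {v : V // v ≠ x} := rfl
      omega
    have hconn : (G.comap (Subtype.val : {v : V // v ≠ x} → V)).Connected := by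
      rw [connected_iff]
      refine ⟨?_, ⟨⟨y, hyx⟩⟩⟩
      rintro ⟨a, ha⟩ ⟨b, hb⟩
      obtain ⟨q0⟩ := hG.isConnected.preconnected a b
      have hxs : x ∉ q0.toPath.1.support :=
        Stmt13G.leaf_not_mem_support hG hleaf ha hb q0.toPath.2
      exact Stmt13G.lift_reach q0.toPath.1 hxs ha hb
    have hacyc : (G.comap (Subtype.val : {v : V // v ≠ x} → V)).IsAcyclic := by
      intro v c hc
      have hinj : Function.Injective
          (⟨Subtype.val, fun h => h⟩ :
            G.comap (Subtype.val : {v : V // v ≠ x} → V) →g G) :=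
        Subtype.val_injective
      have hc' := (SimpleGraph.Walk.map_isCycle_iff_of_injective hinj).2 hc
      exact hG.IsAcyclic _ hc'
    have htree' : (G.comap (Subtype.val : {v : V // v ≠ x} → V)).IsTree := ⟨hconn, hacyc⟩
    obtain ⟨f', hf'inj, w', hAv', hTU', hFD', hRep'⟩ :=
      IH (n - 1) (by omega) (G.comap (Subtype.val : {v : V // v ≠ x} → V)) htree' hcard'
    set c : ℚ := f' ⟨y, hyx⟩ with hcdef
    have hc : c ∈ w' := hRep'.2.1 ⟨y, hyx⟩
    have hug : ∃ u : ℚ, c < u ∧ ∀ m ∈ w', m ≤ c ∨ u < m := by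
      classical
      set s := w'.toFinset.filter (fun m => c < m) with hsdef
      rcases s.eq_empty_or_nonempty with hse | hsne
      · refine ⟨c + 1, by linarith, ?_⟩
        intro m hm
        rcases le_or_gt m c with h | h
        · exact Or.inl h
        · exfalso
          have : m ∈ s := by
            rw [hsdef, Finset.mem_filter]
            exact ⟨List.mem_toFinset.2 hm, by simpa using h⟩
          rw [hse] at this
          exact absurd this (Finset.notMem_empty m)
      · have hm0 : s.min' hsne ∈ s := s.min'_mem hsne
        have hcm0 : c < s.min' hsne := by
          have := (Finset.mem_filter.1 hm0).2
          simpa using this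
        refine ⟨(c + s.min' hsne) / 2, by linarith, ?_⟩
        intro m hm
        rcases le_or_gt m c with h | h
        · exact Or.inl h
        · right
          have : s.min' hsne ≤ m :=
            s.min'_le m (Finset.mem_filter.2 ⟨List.mem_toFinset.2 hm, by simpa using h⟩)
          linarith
    obtain ⟨u, hcu, hgap⟩ := hug
    obtain ⟨w, hTU, hFD, hAv, hmem, haltiff, haltuc, haltu⟩ :=
      Stmt13.step_word hc hcu hgap hTU' hFD' hAv'
    have hu_notin : u ∉ w' := by
      intro hmem'
      rcases hgap u hmem' with h | h
      · linarith
      · exact lt_irrefl u h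
    set f : V → ℚ := fun v => if hv : v = x then u else f' ⟨v, hv⟩ with hf
    have hfval : ∀ (v : V) (hv : v ≠ x), f v = f' ⟨v, hv⟩ := by
      intro v hv; simp only [hf, dif_neg hv]
    have hfx : f x = u := by simp [hf]
    have hrange : ∀ (v : V) (hv : v ≠ x), f' ⟨v, hv⟩ ≠ u :=
      fun v hv h => hu_notin (h ▸ hRep'.2.1 ⟨v, hv⟩)
    have hfinj : Function.Injective f := by
      intro a b hab
      by_cases hax : a = x <;> by_cases hbx : b = x
      · rw [hax, hbx]
      · exfalso
        rw [hfval b hbx] at hab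
        rw [hax, hfx] at hab
        exact hrange b hbx hab.symm
      · exfalso
        rw [hfval a hax] at hab
        rw [hbx, hfx] at hab
        exact hrange a hax hab
      · rw [hfval a hax, hfval b hbx] at hab
        exact congrArg Subtype.val (hf'inj hab)
    have main : ∀ (bb : V) (hbx : bb ≠ x), Alternates w u (f' ⟨bb, hbx⟩) ↔ G.Adj x bb := by
      intro bb hbx
      by_cases hby : bb = y
      · have he : (⟨bb, hbx⟩ : {v : V // v ≠ x}) = ⟨y, hyx⟩ := Subtype.ext hby
        rw [he, ← hcdef]
        exact iff_of_true haltuc (hby ▸ hadj)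
      · refine iff_of_false ?_ ?_
        · intro h
          exact hby (congrArg Subtype.val (hf'inj (haltu _ h)))
        · intro h
          exact hby (hleaf bb h)
    refine ⟨f, hfinj, w, hAv, hTU, hFD, ?_, ?_, ?_⟩
    · intro l hl
      rcases (hmem l).1 hl with h | h
      · obtain ⟨v', hv'⟩ := hRep'.1 l h
        exact ⟨v'.1, by rw [hfval v'.1 v'.2]; exact hv'⟩
      · exact ⟨x, by rw [hfx, h]⟩
    · intro v
      by_cases hv : v = x
      · rw [hv, hfx]
        exact (hmem u).2 (Or.inr rfl)
      · rw [hfval v hv]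
        exact (hmem _).2 (Or.inl (hRep'.2.1 ⟨v, hv⟩))
    · intro aa bb hne
      by_cases hax : aa = x
      · by_cases hbx : bb = x
        · exact absurd (hax.trans hbx.symm) hne
        · rw [hax, hfx, hfval bb hbx]
          exact main bb hbx
      · by_cases hbx : bb = x
        · rw [hbx, hfx, hfval aa hax, alt_comm, G.adj_comm]
          exact main aa hax
        · rw [hfval aa hax, hfval bb hbx,
            haltiff _ _ (hrange aa hax) (hrange bb hbx)]
          exact hRep'.2.2 ⟨aa, hax⟩ ⟨bb, hbx⟩ (fun h => hne (congrArg Subtype.val h))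

end Stmt13

/-- every finite tree can be represented by a 2-uniform 132-avoiding word,
possibly after relabeling its vertices by elements of a linearly ordered set. -/
theorem stmt_13 {V : Type*} [Fintype V] (G : SimpleGraph V) (hG : G.IsTree) :
    ∃ (L : Type) (inst : LinearOrder L) (f : V → L), Function.Injective f ∧
      ∃ w : List L, @Avoids132 L inst w ∧ TwoUniform w ∧ RepresentsLab G f w := by
  obtain ⟨f, hinj, w, hAv, hTU, hFD, hRep⟩ := Stmt13.key (Fintype.card V) G hG rfl
  exact ⟨ℚ, inferInstance, f, hinj, w, hAv, hTU, hRep⟩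
end

section
/- For every n > 3, the complete graph K_n cannot be represented by a 2-uniform 132-avoiding word: for every injective labeling of its vertices by elements of a linearly ordered set, no 2-uniform 132-avoiding word represents K_n. -/
lemma occ_aux {α : Type*} (w : List α) (x : α) (hx : x ∈ w)
    (h2 : TwoUniform w) : ∃ i j : ℕ, i < j ∧ w[i]? = some x ∧ w[j]? = some x ∧
      ∀ k, w[k]? = some x → k = i ∨ k = j := by
  obtain ⟨i, j, hij, hi, hj, hu⟩ := h2 x hx
  rcases hij.lt_or_gt with h | h
  · exact ⟨i, j, h, hi, hj, hu⟩
  · exact ⟨j, i, h, hj, hi, fun k hk => (hu k hk).symm⟩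

/-- If `x` and `y` alternate and each occurs at exactly two positions, then the first
occurrence of `x` precedes the second occurrence of `y`. -/
lemma lemA_s14 {α : Type*} {w : List α} {x y : α}
    {ix jx iy jy : ℕ} (hx : ix < jx) (hy : iy < jy)
    (hiy : w[iy]? = some y) (hjy : w[jy]? = some y)
    (hux : ∀ k, w[k]? = some x → k = ix ∨ k = jx)
    (halt : Alternates w x y) : ix < jy := by
  obtain ⟨k, hk1, hk2, hk3⟩ := halt.2 iy jy hy hiy hjy
  rcases hux k hk3 with rfl | rfl
  · exact hk2
  · exact hx.trans hk2

/-- If `x` and `y` alternate, each occurring at exactly two positions, and the first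
occurrence of `x` precedes that of `y`, then the same holds for second occurrences. -/
lemma lemB {α : Type*} {w : List α} {x y : α} (hne : x ≠ y)
    {ix jx iy jy : ℕ} (hy : iy < jy)
    (hjx : w[jx]? = some x) (hiy : w[iy]? = some y) (hjy : w[jy]? = some y)
    (hux : ∀ k, w[k]? = some x → k = ix ∨ k = jx)
    (halt : Alternates w x y) (hixy : ix < iy) : jx < jy := by
  by_contra h
  push_neg at h
  have hne' : jy ≠ jx := by
    intro hh; rw [hh, hjx] at hjy; exact hne (Option.some.inj hjy)
  have h' : jy < jx := lt_of_le_of_ne h hne'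
  obtain ⟨k, hk1, hk2, hk3⟩ := halt.2 iy jy hy hiy hjy
  rcases hux k hk3 with rfl | rfl
  · omega
  · omega

/-- for every `n > 3`, the complete graph `K_n` cannot be represented by a
2-uniform 132-avoiding word: for every injective labeling of its vertices by elements of a
linearly ordered set, no 2-uniform 132-avoiding word represents `K_n`. -/
theorem stmt_14 (n : ℕ) (hn : 3 < n) :
    ∀ (L : Type*) [LinearOrder L] (f : Fin n → L), Function.Injective f →
      ¬ ∃ w : List L, TwoUniform w ∧ Avoids132 w ∧
        RepresentsLab (⊤ : SimpleGraph (Fin n)) f w := by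
  rintro L _ f hf ⟨w, h2, h132, hrep⟩
  obtain ⟨hlab, hmem, halt⟩ := hrep
  -- four ordered labels
  have hcard : (Finset.univ.image f).card = n := by
    rw [Finset.card_image_of_injective _ hf, Finset.card_univ, Fintype.card_fin]
  let e := (Finset.univ.image f).orderIsoOfFin hcard
  have key : ∀ k : Fin n, ∃ v : Fin n, f v = (e k : L) := by
    intro k
    have hk := (e k).2
    simp only [Finset.mem_image, Finset.mem_univ, true_and] at hk
    exact hk
  obtain ⟨va, hva⟩ := key ⟨0, by omega⟩
  obtain ⟨vb, hvb⟩ := key ⟨1, by omega⟩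
  obtain ⟨vc, hvc⟩ := key ⟨2, by omega⟩
  obtain ⟨vd, hvd⟩ := key ⟨3, by omega⟩
  have hmono : ∀ k k' : Fin n, k < k' → ((e k : L) < (e k' : L)) := by
    intro k k' hk
    exact_mod_cast e.strictMono hk
  have hab : f va < f vb := by rw [hva, hvb]; exact hmono _ _ (by simp [Fin.lt_def])
  have hbc : f vb < f vc := by rw [hvb, hvc]; exact hmono _ _ (by simp [Fin.lt_def])
  have hcd : f vc < f vd := by rw [hvc, hvd]; exact hmono _ _ (by simp [Fin.lt_def])
  have hvne : ∀ x y : Fin n, f x < f y → x ≠ y := by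
    intro x y hxy h; rw [h] at hxy; exact lt_irrefl _ hxy
  have halt' : ∀ x y : Fin n, x ≠ y → Alternates w (f x) (f y) := by
    intro x y hxy
    exact (halt x y hxy).mpr (by simp [hxy])
  -- occurrence data
  obtain ⟨ia, ja, ha1, ha2, ha3, ha4⟩ := occ_aux w (f va) (hmem va) h2
  obtain ⟨ib, jb, hb1, hb2, hb3, hb4⟩ := occ_aux w (f vb) (hmem vb) h2
  obtain ⟨ic, jc, hc1, hc2, hc3, hc4⟩ := occ_aux w (f vc) (hmem vc) h2
  obtain ⟨id', jd, hd1, hd2, hd3, hd4⟩ := occ_aux w (f vd) (hmem vd) h2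
  have hbd : f vb < f vd := hbc.trans hcd
  have had : f va < f vd := hab.trans hbd
  -- the two first occurrences ib and id' are distinct
  have hibid : ib ≠ id' := by
    intro h
    rw [h, hd2] at hb2
    exact (ne_of_lt hbd) (Option.some.inj hb2).symm
  apply h132
  rcases hibid.lt_or_gt with hlt | hlt
  · -- pattern  (f vb, f vd, f vc)  at positions  ib < id' < jc
    refine ⟨ib, id', jc, f vb, f vd, f vc, hlt, ?_, hb2, hd2, hc3, hbc, hcd⟩
    exact lemA_s14 hd1 hc1 hc2 hc3 hd4 (halt' vd vc (hvne _ _ hcd).symm)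
  · -- pattern  (f va, f vd, f vb)  at positions  ia < jd < jb
    refine ⟨ia, jd, jb, f va, f vd, f vb, ?_, ?_, ha2, hd3, hb3, hab, hbd⟩
    · exact lemA_s14 ha1 hd1 hd2 hd3 ha4 (halt' va vd (hvne _ _ had))
    · exact lemB (ne_of_lt hbd).symm hb1 hd3 hb2 hb3 hd4
        (halt' vd vb (hvne _ _ hbd).symm) hlt
end

section
/- The disjoint union of two complete graphs K_4 (the graph on 8 vertices consisting of two vertex-disjoint 4-cliques with no edges between them) is not 132-representable: for every injective labeling of its vertices by elements of a linearly ordered set, no 132-avoiding word represents it. -/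
/-- The disjoint union of two complete graphs `K_4`: two vertex-disjoint 4-cliques with no
edges between them. -/
def twoK4 : SimpleGraph (Fin 4 ⊕ Fin 4) :=
  (⊤ : SimpleGraph (Fin 4)) ⊕g (⊤ : SimpleGraph (Fin 4))

/-- First and second occurrences of a letter occurring at least twice. -/
lemma exists_FS {α : Type*} (w : List α) (x : α)
    (h : ∃ i j : ℕ, i < j ∧ w[i]? = some x ∧ w[j]? = some x) :
    ∃ fx sx : ℕ, fx < sx ∧ w[fx]? = some x ∧ w[sx]? = some x ∧
      (∀ i : ℕ, w[i]? = some x → fx ≤ i) ∧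
      (∀ i : ℕ, w[i]? = some x → fx < i → sx ≤ i) := by
  classical
  obtain ⟨i, j, hij, hi, hj⟩ := h
  have hP : ∃ n : ℕ, w[n]? = some x := ⟨i, hi⟩
  have hfxs : w[Nat.find hP]? = some x := Nat.find_spec hP
  have hQ : ∃ n : ℕ, Nat.find hP < n ∧ w[n]? = some x :=
    ⟨j, lt_of_le_of_lt (Nat.find_le hi) hij, hj⟩
  exact ⟨Nat.find hP, Nat.find hQ, (Nat.find_spec hQ).1, hfxs, (Nat.find_spec hQ).2,
    fun k hk => Nat.find_le hk, fun k hk hlt => Nat.find_le ⟨hlt, hk⟩⟩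

/-- Key interleaving lemma: if `x` and `y` alternate and both occur at least twice,
and the first occurrence of `x` precedes that of `y`, then the first occurrence of `y`
precedes the second occurrence of `x`, which precedes the second occurrence of `y`. -/
lemma pair_FS {α : Type*} {w : List α} {x y : α} (h : Alternates w x y)
    {fx sx fy sy : ℕ}
    (hfx : w[fx]? = some x) (hsx : w[sx]? = some x) (hfsx : fx < sx)
    (hsxmin : ∀ i : ℕ, w[i]? = some x → fx < i → sx ≤ i)
    (hfy : w[fy]? = some y) (hsy : w[sy]? = some y) (hfsy : fy < sy)
    (hfymin : ∀ i : ℕ, w[i]? = some y → fy ≤ i)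
    (hlt : fx < fy) : fy < sx ∧ sx < sy := by
  obtain ⟨k, _, hk2, hky⟩ := h.1 fx sx hfsx hfx hsx
  have h1 : fy < sx := lt_of_le_of_lt (hfymin k hky) hk2
  obtain ⟨l, hl1, hl2, hlx⟩ := h.2 fy sy hfsy hfy hsy
  exact ⟨h1, lt_of_le_of_lt (hsxmin l hlx (lt_trans hlt hl1)) hl2⟩

/-- In a 132-avoiding word, four mutually alternating letters cannot all occur twice. -/
lemma clique_lemma {L : Type*} [LinearOrder L] (w : List L) (hav : Avoids132 w)
    (T : Finset L) (hcard : T.card = 4)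
    (halt : ∀ x ∈ T, ∀ y ∈ T, x ≠ y → Alternates w x y)
    (hocc : ∀ x ∈ T, ∃ i j : ℕ, i < j ∧ w[i]? = some x ∧ w[j]? = some x) : False := by
  classical
  have hlen : (T.sort (· ≤ ·)).length = 4 := by rw [Finset.length_sort, hcard]
  have hsort : (T.sort (· ≤ ·)).Pairwise (· < ·) := T.sortedLT_sort.pairwise
  obtain ⟨a, c, b, M, hl4⟩ : ∃ a c b M, T.sort (· ≤ ·) = [a, c, b, M] := by
    rcases hl : T.sort (· ≤ ·) with _ | ⟨a, _ | ⟨c, _ | ⟨b, _ | ⟨M, _ | t⟩⟩⟩⟩ <;>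
      simp_all
  rw [hl4] at hsort hlen
  simp [List.pairwise_cons] at hsort
  obtain ⟨⟨hac, hab, haM⟩, ⟨hcb, hcM⟩, hbM⟩ := hsort
  have hmem : ∀ z, z ∈ ([a, c, b, M] : List L) → z ∈ T := by
    intro z hz; rw [← Finset.mem_sort (· ≤ ·), hl4]; exact hz
  have haT : a ∈ T := hmem a (by simp)
  have hcT : c ∈ T := hmem c (by simp)
  have hbT : b ∈ T := hmem b (by simp)
  have hMT : M ∈ T := hmem M (by simp)
  obtain ⟨fa, sa, hfsa, hfa, hsa, hfamin, hsamin⟩ := exists_FS w a (hocc a haT)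
  obtain ⟨fc, sc, hfsc, hfc, hsc, hfcmin, hscmin⟩ := exists_FS w c (hocc c hcT)
  obtain ⟨fb, sb, hfsb, hfb, hsb, hfbmin, hsbmin⟩ := exists_FS w b (hocc b hbT)
  obtain ⟨fM, sM, hfsM, hfM, hsM, hfMmin, hsMmin⟩ := exists_FS w M (hocc M hMT)
  have haMalt : Alternates w a M := halt a haT M hMT (ne_of_lt haM)
  have hcMalt : Alternates w c M := halt c hcT M hMT (ne_of_lt hcM)
  have hbMalt : Alternates w b M := halt b hbT M hMT (ne_of_lt hbM)
  -- fact: fM < sb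
  have hfMsb : fM < sb := by
    rcases lt_or_gt_of_ne (show fb ≠ fM by
      intro h; rw [h, hfM] at hfb; exact (ne_of_lt hbM) (Option.some.inj hfb).symm) with h | h
    · exact (pair_FS hbMalt hfb hsb hfsb hsbmin hfM hsM hfsM hfMmin h).1
    · exact lt_trans h hfsb
  apply hav
  rcases lt_or_gt_of_ne (show fa ≠ fM by
      intro h; rw [h, hfM] at hfa; exact (ne_of_lt haM) (Option.some.inj hfa).symm) with h1 | h1
  · -- pattern (fa, fM, sb) with values a < b < M
    exact ⟨fa, fM, sb, a, M, b, h1, hfMsb, hfa, hfM, hsb, hab, hbM⟩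
  · rcases lt_or_gt_of_ne (show fc ≠ fM by
        intro h; rw [h, hfM] at hfc; exact (ne_of_lt hcM) (Option.some.inj hfc).symm) with h2 | h2
    · -- pattern (fc, fM, sb) with values c < b < M
      exact ⟨fc, fM, sb, c, M, b, h2, hfMsb, hfc, hfM, hsb, hcb, hbM⟩
    · -- pattern (fa, sM, sc) with values a < c < M
      have hfasM : fa < sM :=
        (pair_FS (⟨haMalt.2, haMalt.1⟩ : Alternates w M a)
          hfM hsM hfsM hsMmin hfa hsa hfsa hfamin h1).1
      have hsMsc : sM < sc :=
        (pair_FS (⟨hcMalt.2, hcMalt.1⟩ : Alternates w M c)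
          hfM hsM hfsM hsMmin hfc hsc hfsc hfcmin h2).2
      exact ⟨fa, sM, sc, a, M, c, hfasM, hsMsc, hfa, hsM, hsc, hac, hcM⟩

/-- In any word representing a 4-clique (via `halt`, `hocc`), some letter occurs only once,
provided the word avoids 132. -/
lemma clique_single {L : Type*} [LinearOrder L] (w : List L) (hav : Avoids132 w)
    (g : Fin 4 → L) (hg : Function.Injective g)
    (halt : ∀ i j : Fin 4, i ≠ j → Alternates w (g i) (g j))
    (hocc : ∀ i : Fin 4,
      ∃ p q : ℕ, p < q ∧ w[p]? = some (g i) ∧ w[q]? = some (g i)) : False := by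
  classical
  apply clique_lemma w hav (Finset.image g Finset.univ)
  · rw [Finset.card_image_of_injective _ hg, Finset.card_univ, Fintype.card_fin]
  · rintro x hx y hy hxy
    simp only [Finset.mem_image, Finset.mem_univ, true_and] at hx hy
    obtain ⟨i, rfl⟩ := hx
    obtain ⟨j, rfl⟩ := hy
    exact halt i j (fun h => hxy (by rw [h]))
  · rintro x hx
    simp only [Finset.mem_image, Finset.mem_univ, true_and] at hx
    obtain ⟨i, rfl⟩ := hx
    exact hocc i

/-- the disjoint union of two complete graphs `K_4` is not 132-representable:
for every injective labeling of its vertices by elements of a linearly ordered set, no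
132-avoiding word represents it. -/
theorem stmt_15 :
    ∀ (L : Type*) [LinearOrder L] (f : Fin 4 ⊕ Fin 4 → L), Function.Injective f →
      ¬ ∃ w : List L, Avoids132 w ∧ RepresentsLab twoK4 f w := by
  intro L _ f hf h
  obtain ⟨w, hav, _, hmem, halt⟩ := h
  -- left clique: some vertex whose label occurs only once
  have hA : ∃ i : Fin 4, ¬ ∃ p q : ℕ, p < q ∧
      w[p]? = some (f (Sum.inl i)) ∧ w[q]? = some (f (Sum.inl i)) := by
    by_contra hc
    push_neg at hc
    refine clique_single w hav (fun i => f (Sum.inl i))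
      (fun i j hij => hf.eq_iff.1 hij |> Sum.inl.inj) ?_ ?_
    · intro i j hij
      refine (halt (Sum.inl i) (Sum.inl j) (by simp [hij])).2 ?_
      simp [twoK4, hij]
    · intro i
      obtain ⟨p, q, h1, h2, h3⟩ := hc i
      exact ⟨p, q, h1, h2, h3⟩
  -- right clique: some vertex whose label occurs only once
  have hB : ∃ j : Fin 4, ¬ ∃ p q : ℕ, p < q ∧
      w[p]? = some (f (Sum.inr j)) ∧ w[q]? = some (f (Sum.inr j)) := by
    by_contra hc
    push_neg at hc
    refine clique_single w hav (fun i => f (Sum.inr i))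
      (fun i j hij => hf.eq_iff.1 hij |> Sum.inr.inj) ?_ ?_
    · intro i j hij
      refine (halt (Sum.inr i) (Sum.inr j) (by simp [hij])).2 ?_
      simp [twoK4, hij]
    · intro i
      obtain ⟨p, q, h1, h2, h3⟩ := hc i
      exact ⟨p, q, h1, h2, h3⟩
  obtain ⟨i0, hi0⟩ := hA
  obtain ⟨j0, hj0⟩ := hB
  -- the two single-occurrence labels vacuously alternate
  have haltv : Alternates w (f (Sum.inl i0)) (f (Sum.inr j0)) := by
    constructor
    · intro i j hij hi hj
      exact absurd ⟨i, j, hij, hi, hj⟩ hi0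
    · intro i j hij hi hj
      exact absurd ⟨i, j, hij, hi, hj⟩ hj0
  have hadj := (halt (Sum.inl i0) (Sum.inr j0) (by simp)).1 haltv
  simp [twoK4] at hadj
end

section
/- There exists a finite graph that is neither 123-representable nor 132-representable; in particular, the disjoint union of the star K_{1,6} and two copies of the complete graph K_4 is neither 123-representable nor 132-representable. -/
/-- The disjoint union of the star `K_{1,6}` and two copies of the complete graph `K_4`. -/
def starPlusTwoK4 : SimpleGraph ((Fin 1 ⊕ Fin 6) ⊕ (Fin 4 ⊕ Fin 4)) :=
  completeBipartiteGraph (Fin 1) (Fin 6) ⊕g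
    ((⊤ : SimpleGraph (Fin 4)) ⊕g (⊤ : SimpleGraph (Fin 4)))

set_option linter.unusedSectionVars false
set_option linter.unusedVariables false

section Aux
variable {L : Type*} [LinearOrder L] {w : List L}

lemma avoid123_elim (hav : Avoids123 w) {i j k : ℕ} {a b c : L}
    (hij : i < j) (hjk : j < k) (ha : w[i]? = some a) (hb : w[j]? = some b)
    (hc : w[k]? = some c) (h1 : a < b) (h2 : b < c) : False :=
  hav ⟨i, j, k, a, b, c, hij, hjk, ha, hb, hc, h1, h2⟩

lemma avoid132_elim (hav : Avoids132 w) {i j k : ℕ} {a b c : L}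
    (hij : i < j) (hjk : j < k) (ha : w[i]? = some a) (hb : w[j]? = some b)
    (hc : w[k]? = some c) (h1 : a < c) (h2 : c < b) : False :=
  hav ⟨i, j, k, a, b, c, hij, hjk, ha, hb, hc, h1, h2⟩

lemma occ_val_eq {i : ℕ} {a b : L} (ha : w[i]? = some a) (hb : w[i]? = some b) : a = b := by
  rw [ha] at hb; exact Option.some.inj hb

lemma exists_occ {a : L} (h : a ∈ w) : ∃ i : ℕ, w[i]? = some a := by
  obtain ⟨i, hi, rfl⟩ := List.getElem_of_mem h
  exact ⟨i, List.getElem?_eq_getElem hi⟩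

lemma alternates_symm {x y : L} (h : Alternates w x y) : Alternates w y x := ⟨h.2, h.1⟩

lemma alternates_of_single {x y : L}
    (hx : ∀ i j : ℕ, w[i]? = some x → w[j]? = some x → i = j)
    (hy : ∀ i j : ℕ, w[i]? = some y → w[j]? = some y → i = j) : Alternates w x y := by
  constructor
  · intro i j hij hi hj; exact absurd (hx i j hi hj) hij.ne
  · intro i j hij hi hj; exact absurd (hy i j hi hj) hij.ne

lemma exists_min_occ {a : L} (h : ∃ i : ℕ, w[i]? = some a) :
    ∃ i : ℕ, w[i]? = some a ∧ ∀ j, w[j]? = some a → i ≤ j := by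
  classical
  exact ⟨Nat.find h, Nat.find_spec h, fun j hj => Nat.find_min' h hj⟩

lemma exists_min_occ_gt {a : L} {n : ℕ} (h : ∃ i : ℕ, w[i]? = some a ∧ n < i) :
    ∃ i : ℕ, (w[i]? = some a ∧ n < i) ∧ ∀ j, w[j]? = some a → n < j → i ≤ j := by
  classical
  exact ⟨Nat.find h, Nat.find_spec h, fun j hj hj' => Nat.find_min' h ⟨hj, hj'⟩⟩

/-- Core lemma: a 132-avoiding word cannot contain four letters, pairwise alternating,
each occurring at least twice. -/
lemma k4_132 (hav : Avoids132 w) (e : Fin 4 → L) (hinj : Function.Injective e)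
    (hocc : ∀ v : Fin 4, ∃ i j : ℕ, i ≠ j ∧ w[i]? = some (e v) ∧ w[j]? = some (e v))
    (halt : ∀ u v : Fin 4, u ≠ v → Alternates w (e u) (e v)) : False := by
  classical
  -- first occurrences
  have hfst0 : ∀ v : Fin 4, ∃ i : ℕ, w[i]? = some (e v) ∧ ∀ j, w[j]? = some (e v) → i ≤ j := by
    intro v
    obtain ⟨i, j, _, hi, _⟩ := hocc v
    exact exists_min_occ ⟨i, hi⟩
  choose fst hfst hfstmin using hfst0
  -- second occurrences
  have hsnd0 : ∀ v : Fin 4, ∃ i : ℕ, (w[i]? = some (e v) ∧ fst v < i) ∧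
      ∀ j, w[j]? = some (e v) → fst v < j → i ≤ j := by
    intro v
    obtain ⟨i, j, hij, hi, hj⟩ := hocc v
    rcases eq_or_ne i (fst v) with h | h
    · exact exists_min_occ_gt ⟨j, hj, lt_of_le_of_ne (h ▸ hfstmin v j hj) (fun hc => hij (h.trans hc))⟩
    · exact exists_min_occ_gt ⟨i, hi, lt_of_le_of_ne (hfstmin v i hi) (Ne.symm h)⟩
  choose snd hsnd hsndmin using hsnd0
  have hfs_self : ∀ v, fst v < snd v := fun v => (hsnd v).2
  -- pair structure
  have hpair : ∀ u v : Fin 4, u ≠ v → fst u < fst v → fst v < snd u ∧ snd u < snd v := by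
    intro u v huv hlt
    obtain ⟨k, hk1, hk2, hk3⟩ := (halt u v huv).1 (fst u) (snd u) (hfs_self u) (hfst u) (hsnd u).1
    refine ⟨lt_of_le_of_lt (hfstmin v k hk3) hk2, ?_⟩
    obtain ⟨m, hm1, hm2, hm3⟩ := (halt u v huv).2 (fst v) (snd v) (hfs_self v) (hfst v) (hsnd v).1
    exact lt_of_le_of_lt (hsndmin u m hm3 (lt_trans hlt hm1)) hm2
  have hfs : ∀ u v : Fin 4, fst u < snd v := by
    intro u v
    rcases eq_or_ne u v with rfl | huv
    · exact hfs_self u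
    rcases lt_trichotomy (fst u) (fst v) with h | h | h
    · exact lt_trans h (hfs_self v)
    · exact absurd (hinj (occ_val_eq (h ▸ hfst u) (hfst v))) huv
    · exact (hpair v u huv.symm h).1
  -- extract min/max/middles
  obtain ⟨iM, _, hMmax⟩ := Finset.exists_max_image Finset.univ e Finset.univ_nonempty
  have hs0ne : (Finset.univ.erase iM).Nonempty := by
    rw [← Finset.card_pos, Finset.card_erase_of_mem (Finset.mem_univ iM)]
    simp
  obtain ⟨im, him, himmin⟩ := Finset.exists_min_image (Finset.univ.erase iM) e hs0ne
  have him' : im ≠ iM := Finset.ne_of_mem_erase him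
  have hcard2 : ((Finset.univ.erase iM).erase im).card = 2 := by
    rw [Finset.card_erase_of_mem (Finset.mem_erase.mpr ⟨him', Finset.mem_univ im⟩),
      Finset.card_erase_of_mem (Finset.mem_univ iM)]
    simp
  obtain ⟨y, z, hyz, hyzs⟩ := Finset.card_eq_two.mp hcard2
  have hy : y ∈ (Finset.univ.erase iM).erase im := by rw [hyzs]; simp
  have hz : z ∈ (Finset.univ.erase iM).erase im := by rw [hyzs]; simp
  have hyiM : y ≠ iM := Finset.ne_of_mem_erase (Finset.mem_of_mem_erase hy) 
  have hziM : z ≠ iM := Finset.ne_of_mem_erase (Finset.mem_of_mem_erase hz)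
  have hyim : y ≠ im := Finset.ne_of_mem_erase hy
  have hzim : z ≠ im := Finset.ne_of_mem_erase hz
  -- generic middle argument
  have main : ∀ xa xb : Fin 4, xa ≠ iM → xb ≠ iM → xa ≠ im → e xa < e xb → False := by
    intro xa xb hxaM hxbM hxam hab
    have h1 : e xa < e iM := lt_of_le_of_ne (hMmax xa (Finset.mem_univ xa)) (fun h => hxaM (hinj h))
    have h2 : e xb < e iM := lt_of_le_of_ne (hMmax xb (Finset.mem_univ xb)) (fun h => hxbM (hinj h))
    rcases lt_trichotomy (fst xa) (fst iM) with h | h | h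
    · exact avoid132_elim hav h (hfs iM xb) (hfst xa) (hfst iM) (hsnd xb).1 hab h2
    · exact hxaM (hinj (occ_val_eq (h ▸ hfst xa) (hfst iM)))
    · have him2 : e im < e xa := lt_of_le_of_ne
        (himmin xa (Finset.mem_erase.mpr ⟨hxaM, Finset.mem_univ xa⟩))
        (fun hh => hxam (hinj hh).symm)
      exact avoid132_elim hav (hfs im iM) (hpair iM xa (fun hh => hxaM hh.symm) h).2
        (hfst im) (hsnd iM).1 (hsnd xa).1 him2 h1
  rcases lt_trichotomy (e y) (e z) with h | h | h
  · exact main y z hyiM hziM hyim h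
  · exact hyz (hinj h)
  · exact main z y hziM hyiM hzim h
end Aux

section B2
variable {L : Type*} [LinearOrder L] {w : List L}

/-- Case B2 of the star argument: the center occurs exactly twice. -/
lemma star123_B2 (hav : Avoids123 w) (c : L) (l : Fin 6 → L)
    (hinj : Function.Injective l) (hlc : ∀ i, l i ≠ c)
    (halt : ∀ i, Alternates w c (l i))
    (hnon : ∀ i j, i ≠ j → ¬ Alternates w (l i) (l j))
    (x1 x2 : ℕ) (hx12 : x1 < x2) (hx1 : w[x1]? = some c) (hx2 : w[x2]? = some c)
    (hcc : ∀ i, w[i]? = some c → i = x1 ∨ i = x2) : False := by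
  classical
  -- gap occurrence of each leaf
  have hg0 : ∀ i : Fin 6, ∃ k, (x1 < k ∧ k < x2) ∧ w[k]? = some (l i) := by
    intro i
    obtain ⟨k, h1, h2, h3⟩ := (halt i).1 x1 x2 hx12 hx1 hx2
    exact ⟨k, ⟨h1, h2⟩, h3⟩
  choose g hgb hgocc using hg0
  have hg1 : ∀ i, x1 < g i := fun i => (hgb i).1
  have hg2 : ∀ i, g i < x2 := fun i => (hgb i).2
  -- no leaf occurrence at x1 or x2
  have hnotc : ∀ (i : Fin 6) (k : ℕ), w[k]? = some (l i) → k ≠ x1 ∧ k ≠ x2 := by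
    intro i k hk
    constructor
    · intro h; exact hlc i (occ_val_eq (h ▸ hk) hx1)
    · intro h; exact hlc i (occ_val_eq (h ▸ hk) hx2)
  -- uniqueness of pre occurrences
  have hpre_uniq : ∀ (i : Fin 6) (a b : ℕ), w[a]? = some (l i) → w[b]? = some (l i) →
      a < x1 → b < x1 → a = b := by
    intro i a b ha hb ha1 hb1
    by_contra hne
    have key : ∀ a b : ℕ, a < b → w[a]? = some (l i) → w[b]? = some (l i) → b < x1 → False := by
      intro a b hab ha hb hb1
      obtain ⟨m, hm1, hm2, hm3⟩ := (halt i).2 a b hab ha hb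
      rcases hcc m hm3 with rfl | rfl <;> omega
    rcases lt_trichotomy a b with h | h | h
    · exact key a b h ha hb hb1
    · exact hne h
    · exact key b a h hb ha ha1
  -- uniqueness of post occurrences
  have hpost_uniq : ∀ (i : Fin 6) (a b : ℕ), w[a]? = some (l i) → w[b]? = some (l i) →
      x2 < a → x2 < b → a = b := by
    intro i a b ha hb ha1 hb1
    by_contra hne
    have key : ∀ a b : ℕ, a < b → w[a]? = some (l i) → w[b]? = some (l i) → x2 < a → False := by
      intro a b hab ha hb ha1
      obtain ⟨m, hm1, hm2, hm3⟩ := (halt i).2 a b hab ha hb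
      rcases hcc m hm3 with rfl | rfl <;> omega
    rcases lt_trichotomy a b with h | h | h
    · exact key a b h ha hb ha1
    · exact hne h
    · exact key b a h hb ha hb1
  -- uniqueness of the gap occurrence
  have hgap_uniq : ∀ (i : Fin 6) (k : ℕ), w[k]? = some (l i) → x1 < k → k < x2 → k = g i := by
    intro i k hk h1 h2
    by_contra hne
    have key : ∀ a b : ℕ, a < b → w[a]? = some (l i) → w[b]? = some (l i) →
        x1 < a → b < x2 → False := by
      intro a b hab ha hb ha1 hb1
      obtain ⟨m, hm1, hm2, hm3⟩ := (halt i).2 a b hab ha hb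
      rcases hcc m hm3 with rfl | rfl <;> omega
    rcases lt_trichotomy k (g i) with h | h | h
    · exact key k (g i) h hk (hgocc i) h1 (hg2 i)
    · exact hne h
    · exact key (g i) k h (hgocc i) hk (hg1 i) h2
  -- classification of leaf occurrences
  have hclass : ∀ (i : Fin 6) (k : ℕ), w[k]? = some (l i) →
      k < x1 ∨ k = g i ∨ x2 < k := by
    intro i k hk
    have h := hnotc i k hk
    by_cases h1 : k < x1
    · exact Or.inl h1
    by_cases h2 : x2 < k
    · exact Or.inr (Or.inr h2)
    · exact Or.inr (Or.inl (hgap_uniq i k hk (by omega) (by omega)))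
  have hval_ne : ∀ {i j : Fin 6}, i ≠ j → l i ≠ l j := fun hij h => hij (hinj h)
  have hocc_ne : ∀ {i j : Fin 6} {a : ℕ}, i ≠ j → w[a]? = some (l i) →
      w[a]? = some (l j) → False := fun hij ha hb => hval_ne hij (occ_val_eq ha hb)
  -- the break lemma
  have hbrk : ∀ i j : Fin 6, i ≠ j → g i < g j →
      (∃ p, (w[p]? = some (l i) ∧ p < x1) ∧
        ∀ p', w[p']? = some (l j) → p' < x1 → p' < p) ∨
      (∃ q, (w[q]? = some (l j) ∧ x2 < q) ∧
        ∀ q', w[q']? = some (l i) → x2 < q' → q < q') := by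
    intro i j hij hgij
    by_contra hcon
    push_neg at hcon
    obtain ⟨h1, h2⟩ := hcon
    apply hnon i j hij
    constructor
    · -- between two occurrences of l i there is an l j
      intro a b hab ha hb
      have hgi1 := hg1 i; have hgi2 := hg2 i; have hgj1 := hg1 j; have hgj2 := hg2 j
      rcases hclass i a ha with hpa | hpa | hpa
      · rcases hclass i b hb with hpb | hpb | hpb
        · exact absurd (hpre_uniq i a b ha hb hpa hpb) hab.ne
        · obtain ⟨p', hp'1, hp'2, hp'3⟩ := h1 a ⟨ha, hpa⟩
          have hap' : a < p' := lt_of_le_of_ne hp'3 (fun h => hocc_ne hij (h ▸ ha) hp'1)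
          exact ⟨p', hap', by omega, hp'1⟩
        · exact ⟨g j, by omega, by omega, hgocc j⟩
      · rcases hclass i b hb with hpb | hpb | hpb
        · omega
        · omega
        · exact ⟨g j, by omega, by omega, hgocc j⟩
      · rcases hclass i b hb with hpb | hpb | hpb
        · omega
        · omega
        · exact absurd (hpost_uniq i a b ha hb hpa hpb) hab.ne
    · -- between two occurrences of l j there is an l i
      intro a b hab ha hb
      have hgi1 := hg1 i; have hgi2 := hg2 i; have hgj1 := hg1 j; have hgj2 := hg2 j
      rcases hclass j a ha with hpa | hpa | hpa
      · rcases hclass j b hb with hpb | hpb | hpb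
        · exact absurd (hpre_uniq j a b ha hb hpa hpb) hab.ne
        · exact ⟨g i, by omega, by omega, hgocc i⟩
        · exact ⟨g i, by omega, by omega, hgocc i⟩
      · rcases hclass j b hb with hpb | hpb | hpb
        · omega
        · omega
        · obtain ⟨q', hq'1, hq'2, hq'3⟩ := h2 b ⟨hb, hpb⟩
          have hq'b : q' < b := lt_of_le_of_ne hq'3 (fun h => hocc_ne hij.symm (h ▸ hb) hq'1)
          exact ⟨q', by omega, hq'b, hq'1⟩
      · rcases hclass j b hb with hpb | hpb | hpb
        · omega
        · omega
        · exact absurd (hpost_uniq j a b ha hb hpa hpb) hab.ne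

  -- basic forbidden-triple facts
  have hF2 : ∀ (i : Fin 6) (q : ℕ) (β : L), c < l i → g i < q → w[q]? = some β →
      ¬ l i < β := fun i q β hci hq hocc h =>
    avoid123_elim hav (hg1 i) hq hx1 (hgocc i) hocc hci h
  have hF1 : ∀ (i : Fin 6) (q : ℕ) (β : L), l i < c → q < g i → w[q]? = some β →
      ¬ β < l i := fun i q β hci hq hocc h =>
    avoid123_elim hav hq (hg2 i) hocc (hgocc i) hx2 h hci
  -- gap order versus value order
  have hgoS : ∀ i j : Fin 6, c < l i → c < l j → l j < l i → g i < g j := by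
    intro i j hci hcj hji
    have hij : i ≠ j := fun h => absurd hji (by rw [h]; exact lt_irrefl _)
    rcases lt_trichotomy (g i) (g j) with h | h | h
    · exact h
    · exact absurd (occ_val_eq (h ▸ hgocc i) (hgocc j)) (hval_ne hij)
    · exact absurd hji (hF2 j (g i) (l i) hcj h (hgocc i))
  have hgoT : ∀ i j : Fin 6, l i < c → l j < c → l j < l i → g i < g j := by
    intro i j hci hcj hji
    have hij : i ≠ j := fun h => absurd hji (by rw [h]; exact lt_irrefl _)
    rcases lt_trichotomy (g i) (g j) with h | h | h
    · exact h
    · exact absurd (occ_val_eq (h ▸ hgocc i) (hgocc j)) (hval_ne hij)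
    · exact absurd hji (hF1 i (g j) (l j) hci h (hgocc j))
  -- keys
  have hkey1 : ∀ (u v z : Fin 6) (p p' : ℕ), w[p]? = some (l u) → p < x1 →
      w[p']? = some (l v) → p' < p → l v < l u → l u < l z → False := by
    intro u v z p p' hp hp1 hp' hp'p h1 h2
    exact avoid123_elim hav hp'p (by have := hg1 z; omega : p < g z) hp' hp (hgocc z) h1 h2
  have hkey2 : ∀ (u v z : Fin 6) (q q' : ℕ), w[q]? = some (l v) → x2 < q →
      w[q']? = some (l u) → q < q' → l v < l u → l z < l v → False := by
    intro u v z q q' hq hq2 hq' hqq' h1 h2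
    exact avoid123_elim hav (by have := hg2 z; omega : g z < q) hqq' (hgocc z) hq hq' h2 h1
  -- global max and min leaves
  obtain ⟨iM, _, hMmax⟩ := Finset.exists_max_image Finset.univ l Finset.univ_nonempty
  obtain ⟨im, _, himmin⟩ := Finset.exists_min_image Finset.univ l Finset.univ_nonempty
  have hltM : ∀ i : Fin 6, i ≠ iM → l i < l iM :=
    fun i hi => lt_of_le_of_ne (hMmax i (Finset.mem_univ i)) (fun h => hi (hinj h))
  have hmlt : ∀ i : Fin 6, i ≠ im → l im < l i :=
    fun i hi => lt_of_le_of_ne (himmin i (Finset.mem_univ i)) (fun h => hi (hinj h.symm))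
  -- helper to pick three value-sorted elements of a finset
  have hpick3 : ∀ s : Finset (Fin 6), 3 ≤ s.card →
      ∃ u ∈ s, ∃ v ∈ s, ∃ t ∈ s, l v < l u ∧ l t < l v := by
    intro s hs
    obtain ⟨u, hu, humax⟩ := Finset.exists_max_image s l
      (Finset.card_pos.mp (by omega))
    have hcu : 2 ≤ (s.erase u).card := by
      rw [Finset.card_erase_of_mem hu]; omega
    obtain ⟨v, hv, hvmax⟩ := Finset.exists_max_image (s.erase u) l
      (Finset.card_pos.mp (by omega))
    have hcv : 1 ≤ ((s.erase u).erase v).card := by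
      rw [Finset.card_erase_of_mem hv]; omega
    obtain ⟨t, ht⟩ := Finset.card_pos.mp (by omega : 0 < ((s.erase u).erase v).card)
    have hvs : v ∈ s := Finset.mem_of_mem_erase hv
    have hts : t ∈ s := Finset.mem_of_mem_erase (Finset.mem_of_mem_erase ht)
    refine ⟨u, hu, v, hvs, t, hts, ?_, ?_⟩
    · exact lt_of_le_of_ne (humax v hvs) (fun h => (Finset.ne_of_mem_erase hv) (hinj h))
    · exact lt_of_le_of_ne (hvmax t (Finset.mem_of_mem_erase ht))
        (fun h => (Finset.ne_of_mem_erase ht) (hinj h))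
  have herase3 : 3 ≤ ((Finset.univ.erase iM).erase im).card := by
    have h1 : (Finset.univ.erase iM).card = 5 := by
      rw [Finset.card_erase_of_mem (Finset.mem_univ iM)]; simp
    by_cases hmm : im ∈ Finset.univ.erase iM
    · rw [Finset.card_erase_of_mem hmm, h1]; omega
    · rw [Finset.erase_eq_of_notMem hmm, h1]; omega
  have hmemE : ∀ x : Fin 6, x ∈ (Finset.univ.erase iM).erase im → x ≠ iM ∧ x ≠ im :=
    fun x hx => ⟨Finset.ne_of_mem_erase (Finset.mem_of_mem_erase hx), Finset.ne_of_mem_erase hx⟩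
  -- case analysis on the position of c among the values
  by_cases hSx : ∃ i : Fin 6, c < l i
  · by_cases hTx : ∃ j : Fin 6, l j < c
    · -- MIXED CASE
      obtain ⟨ia, hia⟩ := hSx
      obtain ⟨ib, hib⟩ := hTx
      have hciM : c < l iM := lt_of_lt_of_le hia (hMmax ia (Finset.mem_univ ia))
      have himc : l im < c := lt_of_le_of_lt (himmin ib (Finset.mem_univ ib)) hib
      have hST : ∀ i j : Fin 6, c < l i → l j < c → g i < g j := by
        intro i j hci hjc
        have hij : i ≠ j := fun h => lt_asymm hci (h ▸ hjc : l i < c)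
        rcases lt_trichotomy (g i) (g j) with h | h | h
        · exact h
        · exact absurd (occ_val_eq (h ▸ hgocc i) (hgocc j)) (hval_ne hij)
        · rcases hbrk j i hij.symm h with ⟨p, ⟨hpocc, hplt⟩, _⟩ | ⟨q, ⟨hqocc, hqlt⟩, _⟩
          · exact absurd (avoid123_elim hav hplt (hg1 i) hpocc hx1 (hgocc i) hjc hci) not_false
          · exact absurd (avoid123_elim hav (hg2 j) hqlt (hgocc j) hx2 hqocc hjc hci) not_false
      have hnopostS : ∀ (v : Fin 6) (q : ℕ), c < l v → w[q]? = some (l v) → x2 < q → False := by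
        intro v q hcv hq hq2
        exact avoid123_elim hav (hg2 ib) hq2 (hgocc ib) hx2 hq hib hcv
      have hnopreT : ∀ (u : Fin 6) (p : ℕ), l u < c → w[p]? = some (l u) → p < x1 → False := by
        intro u p huc hp hp1
        exact avoid123_elim hav hp1 (hg1 ia) hp hx1 (hgocc ia) huc hia
      set S : Finset (Fin 6) := Finset.univ.filter (fun i => c < l i) with hSdef
      set T : Finset (Fin 6) := Finset.univ.filter (fun i => ¬ c < l i) with hTdef
      have hmemS : ∀ i, i ∈ S ↔ c < l i := by
        intro i; rw [hSdef]; simp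
      have hmemT : ∀ i, i ∈ T ↔ l i < c := by
        intro i
        rw [hTdef]
        simp only [Finset.mem_filter, Finset.mem_univ, true_and]
        constructor
        · intro h
          rcases lt_trichotomy (l i) c with h' | h' | h'
          · exact h'
          · exact absurd h' (hlc i)
          · exact absurd h' h
        · intro h; exact not_lt_of_gt h
      have hSTcard : S.card + T.card = 6 := by
        have h := Finset.card_filter_add_card_filter_not
          (s := (Finset.univ : Finset (Fin 6))) (p := fun i => c < l i)
        rw [← hSdef] at h
        rw [show (Finset.univ.filter fun i => ¬ c < l i) = T from hTdef.symm] at h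
        simpa using h
      have chainS : ∀ u v t : Fin 6, c < l u → c < l v → c < l t →
          l v < l u → l t < l v → l u < l iM → False := by
        intro u v t hcu hcv hct hvu htv huM
        rcases hbrk u v (fun h => absurd hvu (by rw [h]; exact lt_irrefl _))
            (hgoS u v hcu hcv hvu) with ⟨p, ⟨hpocc, hplt⟩, hpall⟩ | ⟨q, ⟨hqocc, hqlt⟩, _⟩
        · have hnoprev : ∀ p' : ℕ, w[p']? = some (l v) → p' < x1 → False := by
            intro p' hp'occ hp'lt
            exact hkey1 u v iM p p' hpocc hplt hp'occ (hpall p' hp'occ hp'lt) hvu huM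
          rcases hbrk v t (fun h => absurd htv (by rw [h]; exact lt_irrefl _))
              (hgoS v t hcv hct htv) with ⟨p2, ⟨hp2occ, hp2lt⟩, _⟩ | ⟨q2, ⟨hq2occ, hq2lt⟩, _⟩
          · exact hnoprev p2 hp2occ hp2lt
          · exact hnopostS t q2 hct hq2occ hq2lt
        · exact hnopostS v q hcv hqocc hqlt
      have chainT : ∀ u v t : Fin 6, l u < c → l v < c → l t < c →
          l v < l u → l t < l v → l im < l t → False := by
        intro u v t hcu hcv hct hvu htv hmt
        rcases hbrk u v (fun h => absurd hvu (by rw [h]; exact lt_irrefl _))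
            (hgoT u v hcu hcv hvu) with ⟨p, ⟨hpocc, hplt⟩, _⟩ | ⟨q, ⟨hqocc, hqlt⟩, hqall⟩
        · exact hnopreT u p hcu hpocc hplt
        · rcases hbrk v t (fun h => absurd htv (by rw [h]; exact lt_irrefl _))
              (hgoT v t hcv hct htv) with ⟨p2, ⟨hp2occ, hp2lt⟩, _⟩ | ⟨q2, ⟨hq2occ, hq2lt⟩, hq2all⟩
          · exact hnopreT v p2 hcv hp2occ hp2lt
          · exact hkey2 v t im q2 q hq2occ hq2lt hqocc (hq2all q hqocc hqlt) htv hmt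
      have hiMS : iM ∈ S := (hmemS iM).mpr hciM
      have himT : im ∈ T := (hmemT im).mpr himc
      by_cases hS3 : 3 ≤ (S.erase iM).card
      · obtain ⟨u, hu, v, hv, t, ht, hvu, htv⟩ := hpick3 _ hS3
        have hmem : ∀ x, x ∈ S.erase iM → c < l x ∧ x ≠ iM := fun x hx =>
          ⟨(hmemS x).mp (Finset.mem_of_mem_erase hx), Finset.ne_of_mem_erase hx⟩
        exact chainS u v t (hmem u hu).1 (hmem v hv).1 (hmem t ht).1 hvu htv
          (hltM u (hmem u hu).2)
      · by_cases hT3 : 3 ≤ (T.erase im).card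
        · obtain ⟨u, hu, v, hv, t, ht, hvu, htv⟩ := hpick3 _ hT3
          have hmem : ∀ x, x ∈ T.erase im → l x < c ∧ x ≠ im := fun x hx =>
            ⟨(hmemT x).mp (Finset.mem_of_mem_erase hx), Finset.ne_of_mem_erase hx⟩
          exact chainT u v t (hmem u hu).1 (hmem v hv).1 (hmem t ht).1 hvu htv
            (hmlt t (hmem t ht).2)
        · -- |S| = |T| = 3
          have hSc : (S.erase iM).card = S.card - 1 := Finset.card_erase_of_mem hiMS
          have hTc : (T.erase im).card = T.card - 1 := Finset.card_erase_of_mem himT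
          have hS1 : 1 ≤ S.card := Finset.card_pos.mpr ⟨iM, hiMS⟩
          have hT1 : 1 ≤ T.card := Finset.card_pos.mpr ⟨im, himT⟩
          have hScard3 : (S.erase iM).card = 2 := by omega
          have hTcard3 : (T.erase im).card = 2 := by omega
          obtain ⟨a1, a2, ha12, hSeq⟩ := Finset.card_eq_two.mp hScard3
          obtain ⟨b1, b2, hb12, hTeq⟩ := Finset.card_eq_two.mp hTcard3
          have ha1m : a1 ∈ S.erase iM := by rw [hSeq]; simp
          have ha2m : a2 ∈ S.erase iM := by rw [hSeq]; simp
          have hb1m : b1 ∈ T.erase im := by rw [hTeq]; simp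
          have hb2m : b2 ∈ T.erase im := by rw [hTeq]; simp
          have hamem : ∀ x, x ∈ S.erase iM → c < l x ∧ x ≠ iM := fun x hx =>
            ⟨(hmemS x).mp (Finset.mem_of_mem_erase hx), Finset.ne_of_mem_erase hx⟩
          have hbmem : ∀ x, x ∈ T.erase im → l x < c ∧ x ≠ im := fun x hx =>
            ⟨(hmemT x).mp (Finset.mem_of_mem_erase hx), Finset.ne_of_mem_erase hx⟩
          have final : ∀ s2 s3 t1 t2 : Fin 6,
              c < l s2 → c < l s3 → s2 ≠ iM → s3 ≠ iM → l s3 < l s2 →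
              l t1 < c → l t2 < c → t1 ≠ im → t2 ≠ im → l t2 < l t1 → False := by
            intro s2 s3 t1 t2 hcs2 hcs3 hs2M hs3M hs32 ht1c ht2c ht1m ht2m ht21
            have hnopres3 : ∀ p' : ℕ, w[p']? = some (l s3) → p' < x1 → False := by
              intro p' hp' hp'1
              rcases hbrk s2 s3 (fun h => absurd hs32 (by rw [h]; exact lt_irrefl _))
                  (hgoS s2 s3 hcs2 hcs3 hs32) with
                ⟨p, ⟨hpocc, hplt⟩, hpall⟩ | ⟨q, ⟨hqocc, hqlt⟩, _⟩
              · exact hkey1 s2 s3 iM p p' hpocc hplt hp' (hpall p' hp' hp'1) hs32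
                  (hltM s2 hs2M)
              · exact hnopostS s3 q hcs3 hqocc hqlt
            have hnopostt1 : ∀ q' : ℕ, w[q']? = some (l t1) → x2 < q' → False := by
              intro q' hq' hq'2
              rcases hbrk t1 t2 (fun h => absurd ht21 (by rw [h]; exact lt_irrefl _))
                  (hgoT t1 t2 ht1c ht2c ht21) with
                ⟨p, ⟨hpocc, hplt⟩, _⟩ | ⟨q, ⟨hqocc, hqlt⟩, hqall⟩
              · exact hnopreT t1 p ht1c hpocc hplt
              · exact hkey2 t1 t2 im q q' hqocc hqlt hq' (hqall q' hq' hq'2) ht21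
                  (hmlt t2 ht2m)
            have hne : s3 ≠ t1 := fun h => lt_asymm hcs3 (h ▸ ht1c : l s3 < c)
            rcases hbrk s3 t1 hne (hST s3 t1 hcs3 ht1c) with
              ⟨p, ⟨hpocc, hplt⟩, _⟩ | ⟨q, ⟨hqocc, hqlt⟩, _⟩
            · exact hnopres3 p hpocc hplt
            · exact hnopostt1 q hqocc hqlt
          rcases lt_trichotomy (l a1) (l a2) with ha | ha | ha
          · rcases lt_trichotomy (l b1) (l b2) with hb | hb | hb
            · exact final a2 a1 b2 b1 (hamem a2 ha2m).1 (hamem a1 ha1m).1 (hamem a2 ha2m).2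
                (hamem a1 ha1m).2 ha (hbmem b2 hb2m).1 (hbmem b1 hb1m).1 (hbmem b2 hb2m).2
                (hbmem b1 hb1m).2 hb
            · exact hb12 (hinj hb)
            · exact final a2 a1 b1 b2 (hamem a2 ha2m).1 (hamem a1 ha1m).1 (hamem a2 ha2m).2
                (hamem a1 ha1m).2 ha (hbmem b1 hb1m).1 (hbmem b2 hb2m).1 (hbmem b1 hb1m).2
                (hbmem b2 hb2m).2 hb
          · exact ha12 (hinj ha)
          · rcases lt_trichotomy (l b1) (l b2) with hb | hb | hb
            · exact final a1 a2 b2 b1 (hamem a1 ha1m).1 (hamem a2 ha2m).1 (hamem a1 ha1m).2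
                (hamem a2 ha2m).2 ha (hbmem b2 hb2m).1 (hbmem b1 hb1m).1 (hbmem b2 hb2m).2
                (hbmem b1 hb1m).2 hb
            · exact hb12 (hinj hb)
            · exact final a1 a2 b1 b2 (hamem a1 ha1m).1 (hamem a2 ha2m).1 (hamem a1 ha1m).2
                (hamem a2 ha2m).2 ha (hbmem b1 hb1m).1 (hbmem b2 hb2m).1 (hbmem b1 hb1m).2
                (hbmem b2 hb2m).2 hb
    · -- PURE S
      have hallS : ∀ i : Fin 6, c < l i := by
        intro i
        rcases lt_trichotomy (l i) c with h | h | h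
        · exact absurd ⟨i, h⟩ hTx
        · exact absurd h (hlc i)
        · exact h
      have hpostmin : ∀ (v : Fin 6) (q : ℕ), w[q]? = some (l v) → x2 < q →
          ∀ z : Fin 6, z ≠ v → l v < l z := by
        intro v q hq hq2 z hzv
        have h := hF2 z q (l v) (hallS z) (by have := hg2 z; omega) hq
        rcases lt_trichotomy (l v) (l z) with h' | h' | h'
        · exact h'
        · exact absurd (hinj h'.symm) hzv
        · exact absurd h' h
      obtain ⟨u, hu, v, hv, t, ht, hvu, htv⟩ := hpick3 _ herase3
      rcases hbrk u v (fun h => absurd hvu (by rw [h]; exact lt_irrefl _))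
          (hgoS u v (hallS u) (hallS v) hvu) with
        ⟨p, ⟨hpocc, hplt⟩, hpall⟩ | ⟨q, ⟨hqocc, hqlt⟩, _⟩
      · have hnoprev : ∀ p' : ℕ, w[p']? = some (l v) → p' < x1 → False := by
          intro p' hp'occ hp'lt
          exact hkey1 u v iM p p' hpocc hplt hp'occ (hpall p' hp'occ hp'lt) hvu
            (hltM u (hmemE u hu).1)
        rcases hbrk v t (fun h => absurd htv (by rw [h]; exact lt_irrefl _))
            (hgoS v t (hallS v) (hallS t) htv) with
          ⟨p2, ⟨hp2occ, hp2lt⟩, _⟩ | ⟨q2, ⟨hq2occ, hq2lt⟩, _⟩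
        · exact hnoprev p2 hp2occ hp2lt
        · exact lt_asymm (hpostmin t q2 hq2occ hq2lt im (fun h => (hmemE t ht).2 h.symm))
            (hmlt t (hmemE t ht).2)
      · exact lt_asymm (hpostmin v q hqocc hqlt im (fun h => (hmemE v hv).2 h.symm))
          (hmlt v (hmemE v hv).2)
  · by_cases hTx : ∃ j : Fin 6, l j < c
    · -- PURE T
      have hallT : ∀ i : Fin 6, l i < c := by
        intro i
        rcases lt_trichotomy (l i) c with h | h | h
        · exact h
        · exact absurd h (hlc i)
        · exact absurd ⟨i, h⟩ hSx
      have hpremax : ∀ (v : Fin 6) (p : ℕ), w[p]? = some (l v) → p < x1 →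
          ∀ z : Fin 6, z ≠ v → l z < l v := by
        intro v p hp hp1 z hzv
        have h := hF1 z p (l v) (hallT z) (by have := hg1 z; omega) hp
        rcases lt_trichotomy (l z) (l v) with h' | h' | h'
        · exact h'
        · exact absurd (hinj h') hzv
        · exact absurd h' h
      obtain ⟨u, hu, v, hv, t, ht, hvu, htv⟩ := hpick3 _ herase3
      rcases hbrk u v (fun h => absurd hvu (by rw [h]; exact lt_irrefl _))
          (hgoT u v (hallT u) (hallT v) hvu) with
        ⟨p, ⟨hpocc, hplt⟩, _⟩ | ⟨q, ⟨hqocc, hqlt⟩, hqall⟩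
      · exact lt_asymm (hpremax u p hpocc hplt iM (fun h => (hmemE u hu).1 h.symm))
          (hltM u (hmemE u hu).1)
      · rcases hbrk v t (fun h => absurd htv (by rw [h]; exact lt_irrefl _))
            (hgoT v t (hallT v) (hallT t) htv) with
          ⟨p2, ⟨hp2occ, hp2lt⟩, _⟩ | ⟨q2, ⟨hq2occ, hq2lt⟩, hq2all⟩
        · exact lt_asymm (hpremax v p2 hp2occ hp2lt iM (fun h => (hmemE v hv).1 h.symm))
            (hltM v (hmemE v hv).1)
        · exact hkey2 v t im q2 q hq2occ hq2lt hqocc (hq2all q hqocc hqlt) htv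
            (hmlt t (hmemE t ht).2)
    · rcases lt_trichotomy (l 0) c with h | h | h
      · exact hTx ⟨0, h⟩
      · exact hlc 0 h
      · exact hSx ⟨0, h⟩

/-- Case A of the star argument: the center occurs exactly once. -/
lemma star123_A (hav : Avoids123 w) (c : L) (l : Fin 6 → L)
    (hinj : Function.Injective l) (hlc : ∀ i, l i ≠ c)
    (hlw : ∀ i, ∃ k : ℕ, w[k]? = some (l i))
    (halt : ∀ i, Alternates w c (l i))
    (hnon : ∀ i j, i ≠ j → ¬ Alternates w (l i) (l j))
    (x1 : ℕ) (hx1 : w[x1]? = some c)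
    (huniq : ∀ i, w[i]? = some c → i = x1) : False := by
  classical
  have hval_ne : ∀ {i j : Fin 6}, i ≠ j → l i ≠ l j := fun hij h => hij (hinj h)
  have hstrad : ∀ (i : Fin 6) (a b : ℕ), a < b → w[a]? = some (l i) → w[b]? = some (l i) →
      a < x1 ∧ x1 < b := by
    intro i a b hab ha hb
    obtain ⟨m, hm1, hm2, hm3⟩ := (halt i).2 a b hab ha hb
    have := huniq m hm3
    omega
  have hfst0 : ∀ i : Fin 6, ∃ k, w[k]? = some (l i) ∧ ∀ j, w[j]? = some (l i) → k ≤ j :=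
    fun i => exists_min_occ (hlw i)
  choose fst hfstocc hfstmin using hfst0
  have hfstne : ∀ {i j : Fin 6}, i ≠ j → fst i ≠ fst j := by
    intro i j hij h
    exact hval_ne hij (occ_val_eq (h ▸ hfstocc i) (hfstocc j))
  set T : Finset (Fin 6) :=
    Finset.univ.filter (fun i : Fin 6 => ∃ k, w[k]? = some (l i) ∧ fst i < k) with hTdef
  have hmemT : ∀ i : Fin 6, i ∈ T ↔ ∃ k, w[k]? = some (l i) ∧ fst i < k := by
    intro i; rw [hTdef]; simp
  -- at most one leaf occurs once
  have hTcard : 5 ≤ T.card := by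
    have hone : (Finset.univ.filter
        (fun i : Fin 6 => ¬ ∃ k, w[k]? = some (l i) ∧ fst i < k)).card ≤ 1 := by
      refine Finset.card_le_one.mpr ?_
      intro a ha b hb
      by_contra hab
      rw [Finset.mem_filter] at ha hb
      have hsgl : ∀ (x : Fin 6), (¬ ∃ k, w[k]? = some (l x) ∧ fst x < k) →
          ∀ u v : ℕ, w[u]? = some (l x) → w[v]? = some (l x) → u = v := by
        intro x hx u v hu hv
        have h1 := hfstmin x u hu
        have h2 := hfstmin x v hv
        have h3 : ¬ fst x < u := fun hh => hx ⟨u, hu, hh⟩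
        have h4 : ¬ fst x < v := fun hh => hx ⟨v, hv, hh⟩
        omega
      exact hnon a b hab (alternates_of_single (hsgl a ha.2) (hsgl b hb.2))
    have h := Finset.card_filter_add_card_filter_not
      (s := (Finset.univ : Finset (Fin 6)))
      (p := fun i : Fin 6 => ∃ k, w[k]? = some (l i) ∧ fst i < k)
    rw [← hTdef] at h
    have hc6 : (Finset.univ : Finset (Fin 6)).card = 6 := by simp
    omega
  -- second-occurrence data for twice leaves
  have hsnd0 : ∀ i : Fin 6, i ∈ T → ∃ s, (w[s]? = some (l i) ∧ fst i < s) ∧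
      ∀ j, w[j]? = some (l i) → fst i < j → s ≤ j := by
    intro i hi
    exact exists_min_occ_gt ((hmemT i).mp hi)
  -- occurrence classification for twice leaves
  have hocls : ∀ (i : Fin 6) (s : ℕ), (w[s]? = some (l i) ∧ fst i < s) →
      (∀ j, w[j]? = some (l i) → fst i < j → s ≤ j) →
      ∀ k, w[k]? = some (l i) → k = fst i ∨ k = s := by
    intro i s hs hsmin k hk
    rcases eq_or_lt_of_le (hfstmin i k hk) with h | h
    · exact Or.inl h.symm
    rcases eq_or_lt_of_le (hsmin k hk h) with h2 | h2
    · exact Or.inr h2.symm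
    · -- three occurrences: contradiction with straddling
      have hx1s : x1 < s := (hstrad i (fst i) s hs.2 (hfstocc i) hs.1).2
      have hsx1 : s < x1 := (hstrad i s k h2 hs.1 hk).1
      omega
  -- straddling of (fst, snd)
  have hstr2 : ∀ (i : Fin 6) (s : ℕ), (w[s]? = some (l i) ∧ fst i < s) →
      fst i < x1 ∧ x1 < s := fun i s hs => hstrad i (fst i) s hs.2 (hfstocc i) hs.1
  -- the reversal lemma
  have hrev : ∀ (u v : Fin 6) (su sv : ℕ), u ≠ v →
      (w[su]? = some (l u) ∧ fst u < su) →
      (∀ j, w[j]? = some (l u) → fst u < j → su ≤ j) →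
      (w[sv]? = some (l v) ∧ fst v < sv) →
      (∀ j, w[j]? = some (l v) → fst v < j → sv ≤ j) →
      fst u < fst v → sv < su := by
    intro u v su sv huv hsu hsumin hsv hsvmin hfuv
    have hne : su ≠ sv := fun h => hval_ne huv (occ_val_eq (h ▸ hsu.1) hsv.1)
    rcases lt_or_gt_of_ne hne with hlt | hgt
    · exfalso
      apply hnon u v huv
      have hfu := hstr2 u su hsu
      have hfv := hstr2 v sv hsv
      constructor
      · intro a b hab ha hb
        have hca := hocls u su hsu hsumin a ha
        have hcb := hocls u su hsu hsumin b hb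
        have h1 := hsu.2
        rcases hca with h | h <;> rcases hcb with h' | h'
        · omega
        · exact ⟨fst v, by omega, by omega, hfstocc v⟩
        · omega
        · omega
      · intro a b hab ha hb
        have hca := hocls v sv hsv hsvmin a ha
        have hcb := hocls v sv hsv hsvmin b hb
        have h1 := hsv.2
        rcases hca with h | h <;> rcases hcb with h' | h'
        · omega
        · exact ⟨su, by omega, by omega, hsu.1⟩
        · omega
        · omega
    · exact hgt
  -- select the max-valued twice leaf
  obtain ⟨iM, hiMT, hMmax⟩ := Finset.exists_max_image T l
    (Finset.card_pos.mp (by omega))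
  -- select three more twice leaves sorted by first occurrence
  have hcard3 : 3 ≤ (T.erase iM).card := by
    rw [Finset.card_erase_of_mem hiMT]; omega
  obtain ⟨p, hp, hpmin⟩ := Finset.exists_min_image (T.erase iM) fst
    (Finset.card_pos.mp (by omega))
  have hcard2 : 2 ≤ ((T.erase iM).erase p).card := by
    rw [Finset.card_erase_of_mem hp]; omega
  obtain ⟨q, hq, hqmin⟩ := Finset.exists_min_image ((T.erase iM).erase p) fst
    (Finset.card_pos.mp (by omega))
  have hcard1 : 1 ≤ (((T.erase iM).erase p).erase q).card := by
    rw [Finset.card_erase_of_mem hq]; omega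
  obtain ⟨r, hr⟩ := Finset.card_pos.mp (by omega : 0 < (((T.erase iM).erase p).erase q).card)
  -- memberships and distinctness
  have hqE : q ∈ T.erase iM := Finset.mem_of_mem_erase hq
  have hrE : r ∈ T.erase iM := Finset.mem_of_mem_erase (Finset.mem_of_mem_erase hr)
  have hpT : p ∈ T := Finset.mem_of_mem_erase hp
  have hqT : q ∈ T := Finset.mem_of_mem_erase hqE
  have hrT : r ∈ T := Finset.mem_of_mem_erase hrE
  have hpM : p ≠ iM := Finset.ne_of_mem_erase hp
  have hqM : q ≠ iM := Finset.ne_of_mem_erase hqE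
  have hrM : r ≠ iM := Finset.ne_of_mem_erase hrE
  have hqp : q ≠ p := Finset.ne_of_mem_erase hq
  have hrq : r ≠ q := Finset.ne_of_mem_erase hr
  have hrp : r ≠ p := Finset.ne_of_mem_erase (Finset.mem_of_mem_erase hr)
  have hfpq : fst p < fst q := lt_of_le_of_ne (hpmin q hqE) (hfstne (Ne.symm hqp))
  have hfqr : fst q < fst r := lt_of_le_of_ne
    (hqmin r (Finset.mem_of_mem_erase hr)) (hfstne (Ne.symm hrq))
  have hlpM : l p < l iM := lt_of_le_of_ne (hMmax p hpT) (hval_ne hpM)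
  have hlqM : l q < l iM := lt_of_le_of_ne (hMmax q hqT) (hval_ne hqM)
  have hlrM : l r < l iM := lt_of_le_of_ne (hMmax r hrT) (hval_ne hrM)
  -- second occurrence of iM
  obtain ⟨sM, hsM, hsMmin⟩ := hsnd0 iM hiMT
  have hsMx1 : x1 < sM := (hstr2 iM sM hsM).2
  obtain ⟨sp, hsp, hspmin⟩ := hsnd0 p hpT
  obtain ⟨sq, hsq, hsqmin⟩ := hsnd0 q hqT
  obtain ⟨sr, hsr, hsrmin⟩ := hsnd0 r hrT
  have hfp1 := (hstr2 p sp hsp).1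
  have hfq1 := (hstr2 q sq hsq).1
  have hfr1 := (hstr2 r sr hsr).1
  rcases lt_trichotomy (l p) (l q) with h1 | h1 | h1
  · exact avoid123_elim hav hfpq (by omega : fst q < sM) (hfstocc p) (hfstocc q) hsM.1 h1 hlqM
  · exact hqp (hinj h1).symm
  · rcases lt_trichotomy (l q) (l r) with h2 | h2 | h2
    · exact avoid123_elim hav hfqr (by omega : fst r < sM) (hfstocc q) (hfstocc r) hsM.1 h2 hlrM
    · exact hrq (hinj h2).symm
    · have hrv1 : sq < sp := hrev p q sp sq (Ne.symm hqp) hsp hspmin hsq hsqmin hfpq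
      have hrv2 : sr < sq := hrev q r sq sr (Ne.symm hrq) hsq hsqmin hsr hsrmin hfqr
      exact avoid123_elim hav hrv2 hrv1 hsr.1 hsq.1 hsp.1 h2 h1

/-- A 123-avoiding word cannot represent the star $K_{1,6}$. -/
lemma star123 (hav : Avoids123 w) (c : L) (l : Fin 6 → L)
    (hinj : Function.Injective l) (hlc : ∀ i, l i ≠ c)
    (hcw : ∃ i : ℕ, w[i]? = some c) (hlw : ∀ i, ∃ k : ℕ, w[k]? = some (l i))
    (halt : ∀ i, Alternates w c (l i))
    (hnon : ∀ i j, i ≠ j → ¬ Alternates w (l i) (l j)) : False := by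
  classical
  obtain ⟨x1, hx1, hx1min⟩ := exists_min_occ hcw
  by_cases h2 : ∃ i, w[i]? = some c ∧ x1 < i
  · obtain ⟨x2, ⟨hx2, hx12⟩, hx2min⟩ := exists_min_occ_gt h2
    by_cases h3 : ∃ i, w[i]? = some c ∧ x2 < i
    · -- case B1 : at least three occurrences of the center
      obtain ⟨x3, hx3, hx23⟩ := h3
      have hG1 : ∀ i : Fin 6, ∃ k, x1 < k ∧ k < x2 ∧ w[k]? = some (l i) :=
        fun i => (halt i).1 x1 x2 hx12 hx1 hx2
      have hG2 : ∀ i : Fin 6, ∃ k, x2 < k ∧ k < x3 ∧ w[k]? = some (l i) :=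
        fun i => (halt i).1 x2 x3 hx23 hx2 hx3
      obtain ⟨iM, _, hMmax⟩ := Finset.exists_max_image Finset.univ l Finset.univ_nonempty
      obtain ⟨im, _, himmin⟩ := Finset.exists_min_image Finset.univ l Finset.univ_nonempty
      obtain ⟨imd, hd1, hd2⟩ :=
        (by decide : ∀ a b : Fin 6, ∃ c : Fin 6, c ≠ a ∧ c ≠ b) im iM
      have hlt1 : l im < l imd :=
        lt_of_le_of_ne (himmin imd (Finset.mem_univ imd)) (fun h => hd1 (hinj h).symm)
      have hlt2 : l imd < l iM :=
        lt_of_le_of_ne (hMmax imd (Finset.mem_univ imd)) (fun h => hd2 (hinj h))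
      rcases lt_trichotomy (l imd) c with h | h | h
      · obtain ⟨k1, hk11, hk12, hk13⟩ := hG1 im
        obtain ⟨k2, hk21, hk22, hk23⟩ := hG2 imd
        exact avoid123_elim hav (lt_trans hk12 hk21) hk22 hk13 hk23 hx3 hlt1 h
      · exact hlc imd h
      · obtain ⟨k1, hk11, hk12, hk13⟩ := hG1 imd
        obtain ⟨k2, hk21, hk22, hk23⟩ := hG2 iM
        exact avoid123_elim hav hk11 (lt_trans hk12 hk21) hx1 hk13 hk23 h hlt2
    · -- case B2 : exactly two occurrences of the center
      refine star123_B2 hav c l hinj hlc halt hnon x1 x2 hx12 hx1 hx2 ?_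
      intro i hi
      rcases eq_or_ne i x1 with h | h
      · exact Or.inl h
      · have h1 := hx1min i hi
        have h4 : x1 < i := lt_of_le_of_ne h1 (Ne.symm h)
        have h5 := hx2min i hi h4
        have h6 : ¬ x2 < i := fun hh => h3 ⟨i, hi, hh⟩
        omega
  · -- case A : exactly one occurrence of the center
    refine star123_A hav c l hinj hlc hlw halt hnon x1 hx1 ?_
    intro i hi
    have h1 := hx1min i hi
    have h4 : ¬ x1 < i := fun hh => h2 ⟨i, hi, hh⟩
    omega

end B2

section Main

lemma part123 (L : Type*) [LinearOrder L] (f : (Fin 1 ⊕ Fin 6) ⊕ (Fin 4 ⊕ Fin 4) → L)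
    (hf : Function.Injective f) :
    ¬ ∃ w : List L, Avoids123 w ∧ RepresentsLab starPlusTwoK4 f w := by
  rintro ⟨w, hav, -, hmem, hadj⟩
  refine star123 hav (f (Sum.inl (Sum.inl 0))) (fun i => f (Sum.inl (Sum.inr i)))
    ?_ ?_ ?_ ?_ ?_ ?_
  · intro i j h
    have h2 := hf h
    simpa using h2
  · intro i h
    have h2 := hf h
    simp at h2
  · exact exists_occ (hmem _)
  · exact fun i => exists_occ (hmem _)
  · intro i
    refine (hadj _ _ ?_).mpr ?_
    · simp
    · simp [starPlusTwoK4]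
  · intro i j hij halt'
    have h2 := (hadj (Sum.inl (Sum.inr i)) (Sum.inl (Sum.inr j))
      (fun h => hij (by simpa using h))).mp halt'
    simp [starPlusTwoK4] at h2

lemma part132 (L : Type*) [LinearOrder L] (f : (Fin 1 ⊕ Fin 6) ⊕ (Fin 4 ⊕ Fin 4) → L)
    (hf : Function.Injective f) :
    ¬ ∃ w : List L, Avoids132 w ∧ RepresentsLab starPlusTwoK4 f w := by
  rintro ⟨w, hav, -, hmem, hadj⟩
  set Two : L → Prop :=
    fun α => ∃ i j : ℕ, i ≠ j ∧ w[i]? = some α ∧ w[j]? = some α with hTwo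
  have hsgl : ∀ α : L, ¬ Two α → ∀ u v : ℕ, w[u]? = some α → w[v]? = some α → u = v := by
    intro α hα u v hu hv
    by_contra huv
    exact hα ⟨u, v, huv, hu, hv⟩
  have hK : (∀ v : Fin 4, Two (f (Sum.inr (Sum.inl v)))) ∨
      (∀ v : Fin 4, Two (f (Sum.inr (Sum.inr v)))) := by
    by_contra hc
    push_neg at hc
    obtain ⟨⟨a, ha⟩, ⟨b, hb⟩⟩ := hc
    have hne : (Sum.inr (Sum.inl a) : (Fin 1 ⊕ Fin 6) ⊕ (Fin 4 ⊕ Fin 4)) ≠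
        Sum.inr (Sum.inr b) := by simp
    have halt' : Alternates w (f (Sum.inr (Sum.inl a))) (f (Sum.inr (Sum.inr b))) :=
      alternates_of_single (hsgl _ ha) (hsgl _ hb)
    have h2 := (hadj _ _ hne).mp halt'
    simp [starPlusTwoK4] at h2
  rcases hK with h | h
  · refine k4_132 hav (fun i => f (Sum.inr (Sum.inl i))) ?_ (fun v => h v) ?_
    · intro i j hh
      have h2 := hf hh
      simpa using h2
    · intro u v huv
      refine (hadj _ _ (fun hh => huv (by simpa using hh))).mpr ?_
      simp [starPlusTwoK4, huv]
  · refine k4_132 hav (fun i => f (Sum.inr (Sum.inr i))) ?_ (fun v => h v) ?_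
    · intro i j hh
      have h2 := hf hh
      simpa using h2
    · intro u v huv
      refine (hadj _ _ (fun hh => huv (by simpa using hh))).mpr ?_
      simp [starPlusTwoK4, huv]

end Main

/-- there exists a finite graph that is neither 123-representable nor
132-representable; in particular, the disjoint union of the star `K_{1,6}` and two copies of
`K_4` is neither 123-representable nor 132-representable (for every injective labeling of
its vertices by elements of a linearly ordered set, no 123-avoiding word and no 132-avoiding
word represents it). -/
theorem stmt_16 :
    (∃ (V : Type) (_ : Fintype V) (G : SimpleGraph V), ¬ Rep123 G ∧ ¬ Rep132 G) ∧
    (∀ (L : Type*) [LinearOrder L] (f : (Fin 1 ⊕ Fin 6) ⊕ (Fin 4 ⊕ Fin 4) → L),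
        Function.Injective f →
        ¬ ∃ w : List L, Avoids123 w ∧ RepresentsLab starPlusTwoK4 f w) ∧
    (∀ (L : Type*) [LinearOrder L] (f : (Fin 1 ⊕ Fin 6) ⊕ (Fin 4 ⊕ Fin 4) → L),
        Function.Injective f →
        ¬ ∃ w : List L, Avoids132 w ∧ RepresentsLab starPlusTwoK4 f w) := by
  constructor
  · refine ⟨(Fin 1 ⊕ Fin 6) ⊕ (Fin 4 ⊕ Fin 4), inferInstance, starPlusTwoK4, ?_, ?_⟩
    · rintro ⟨L, inst, f, hinj, w, hav, hrep⟩
      exact @part123 L inst f hinj ⟨w, hav, hrep⟩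
    · rintro ⟨L, inst, f, hinj, w, hav, hrep⟩
      exact @part132 L inst f hinj ⟨w, hav, hrep⟩
  constructor
  · intro L _ f hf
    exact part123 L f hf
  · intro L _ f hf
    exact part132 L f hf
end
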